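/- arXiv:1512.07020 — 6 statements merged into one kernel-verified Lean document; each statement's English description precedes it below -/
import Mathlib

section
/- Let Φ be a reduced root system in a finite-dimensional real inner product space with positive roots Φ⁺ and simple roots Δ = {α₁,…,α_ℓ}. Suppose 𝔤 is a complex Lie algebra with basis {e_α : α ∈ Φ} ∪ {h₁,…,h_ℓ} whose bracket is given, for integer structure constants ε(α,β) with ε(β,α) = −ε(α,β), by: [h_r,h_s] = 0; [h_r,e_α] = ⟨α,α_r∨⟩ e_α where ⟨α,α_r∨⟩ = 2(α,α_r)/(α_r,α_r); [e_α,e_β] = ε(α,β) e_{α+β} if α+β ∈ Φ; [e_α,e_β] = 0 if α+β ∉ Φ∪{0}; and [e_α,e_{−α}] = ε(α,−α) h_α, where h_α = Σᵢ mᵢ hᵢ for α = Σᵢ mᵢ αᵢ. Then for every symmetric ℤᵏ-valued 2-cocycle ω on Φ, the R-bilinear bracket on the free module over the Laurent polynomial ring R = ℂ[I₁^{±1},…,I_k^{±1}] with the same basis, defined by the same relations except that ε(α,β) is replaced by ε(α,β)·I^{ω(α|β)} (where I^m = I₁^{m₁}···I_k^{m_k} for m ∈ ℤᵏ), satisfies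 the Jacobi identity, i.e., defines a Lie algebra over R. -/
open scoped RealInnerProductSpace

/-- A reduced root system `Φ` in a real inner product space `V`:
a finite set of nonzero vectors spanning `V`, closed under the reflections it determines,
with integral Cartan numbers, such that the only multiples of a root in `Φ` are `±α`. -/
structure ReducedRootSystem (V : Type) [NormedAddCommGroup V] [InnerProductSpace ℝ V] :
    Type where
  roots : Set V
  finite : roots.Finite
  nonzero : ∀ α ∈ roots, α ≠ 0
  spans : Submodule.span ℝ roots = ⊤
  reflect_mem : ∀ α ∈ roots, ∀ β ∈ roots, β - (2 * ⟪β, α⟫ / ⟪α, α⟫) • α ∈ roots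
  integral : ∀ α ∈ roots, ∀ β ∈ roots, ∃ n : ℤ, 2 * ⟪β, α⟫ / ⟪α, α⟫ = (n : ℝ)
  reduced : ∀ α ∈ roots, ∀ t : ℝ, t • α ∈ roots → t = 1 ∨ t = -1

variable {V : Type} [NormedAddCommGroup V] [InnerProductSpace ℝ V]

/-- `Φ₀ = Φ ∪ {0}`. -/
def rootsZero (Φ : ReducedRootSystem V) : Set V := insert 0 Φ.roots

/-- The positive roots with respect to a linear functional `f` (nonvanishing on `Φ`). -/
def posRoots (Φ : ReducedRootSystem V) (f : V →ₗ[ℝ] ℝ) : Set V :=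
  {α | α ∈ Φ.roots ∧ 0 < f α}

/-- The simple roots: positive roots that are not the sum of two positive roots. -/
def simpleRoots (Φ : ReducedRootSystem V) (f : V →ₗ[ℝ] ℝ) : Set V :=
  {α | α ∈ posRoots Φ f ∧ ¬ ∃ β ∈ posRoots Φ f, ∃ γ ∈ posRoots Φ f, α = β + γ}

/-- The ring `R = ℂ[I₁^{±1},…,I_k^{±1}]` of Laurent polynomials in `k` variables, realized
as the monoid algebra of `ℤᵏ` over `ℂ`. -/
abbrev MvLaurent (k : ℕ) : Type := AddMonoidAlgebra ℂ (Fin k → ℤ)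

/-- The monomial `c · I^m = c · I₁^{m₁} ⋯ I_k^{m_k}` in `MvLaurent k`. -/
noncomputable def laurentMonomial {k : ℕ} (m : Fin k → ℤ) (c : ℂ) : MvLaurent k :=
  AddMonoidAlgebra.single m c

open Classical in
/-- The deformed bracket on the basis elements of the free `MvLaurent k`-module with basis
`{e_α : α ∈ Φ} ∪ {h₁,…,h_ℓ}`: the same relations as in the Cartan–Weyl basis, except that
the structure constant `ε(α,β)` is replaced by `ε(α,β)·I^{ω(α|β)}`. -/
noncomputable def deformedBracketIdx (Φ : ReducedRootSystem V) (k ℓ : ℕ) (a : Fin ℓ → V)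
    (ε : V → V → ℤ) (ω : V → V → Fin k → ℤ) (m : V → Fin ℓ → ℤ) :
    ↥Φ.roots ⊕ Fin ℓ → ↥Φ.roots ⊕ Fin ℓ → ((↥Φ.roots ⊕ Fin ℓ) →₀ MvLaurent k)
  | Sum.inr _, Sum.inr _ => 0
  | Sum.inr r, Sum.inl α =>
      Finsupp.single (Sum.inl α)
        (algebraMap ℝ (MvLaurent k) (2 * ⟪(α : V), a r⟫ / ⟪a r, a r⟫))
  | Sum.inl α, Sum.inr r =>
      - Finsupp.single (Sum.inl α)
        (algebraMap ℝ (MvLaurent k) (2 * ⟪(α : V), a r⟫ / ⟪a r, a r⟫))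
  | Sum.inl α, Sum.inl β =>
      if hs : (α : V) + (β : V) ∈ Φ.roots then
        Finsupp.single (Sum.inl ⟨(α : V) + (β : V), hs⟩)
          (laurentMonomial (ω (α : V) (β : V)) ((ε (α : V) (β : V) : ℂ)))
      else if (α : V) + (β : V) = 0 then
        ∑ i : Fin ℓ, Finsupp.single (Sum.inr i)
          (laurentMonomial (ω (α : V) (β : V)) ((ε (α : V) (β : V) : ℂ) * (m (α : V) i : ℂ)))
      else 0

/-- The `MvLaurent k`-bilinear extension of the deformed bracket to the free module
`(↥Φ.roots ⊕ Fin ℓ) →₀ MvLaurent k`. -/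
noncomputable def deformedBracket (Φ : ReducedRootSystem V) (k ℓ : ℕ) (a : Fin ℓ → V)
    (ε : V → V → ℤ) (ω : V → V → Fin k → ℤ) (m : V → Fin ℓ → ℤ)
    (x y : (↥Φ.roots ⊕ Fin ℓ) →₀ MvLaurent k) : (↥Φ.roots ⊕ Fin ℓ) →₀ MvLaurent k :=
  x.sum fun i c => y.sum fun j d => (c * d) • deformedBracketIdx Φ k ℓ a ε ω m i j

section Aux

variable {V : Type} [NormedAddCommGroup V] [InnerProductSpace ℝ V]
variable (Φ : ReducedRootSystem V) (k ℓ : ℕ) (a : Fin ℓ → V)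
variable (ε : V → V → ℤ) (ω : V → V → Fin k → ℤ) (m : V → Fin ℓ → ℤ)

lemma lm_mul {k : ℕ} (w w' : Fin k → ℤ) (c d : ℂ) :
    laurentMonomial w c * laurentMonomial w' d = laurentMonomial (w + w') (c * d) :=
  AddMonoidAlgebra.single_mul_single _ _ _ _

lemma lm_algebraMap {k : ℕ} (t : ℝ) :
    algebraMap ℝ (MvLaurent k) t = laurentMonomial 0 (t : ℂ) := by
  rw [IsScalarTower.algebraMap_apply ℝ ℂ (MvLaurent k)]; rfl

lemma dB_zero_left (y) : deformedBracket Φ k ℓ a ε ω m 0 y = 0 := by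
  simp [deformedBracket]

lemma dB_zero_right (x) : deformedBracket Φ k ℓ a ε ω m x 0 = 0 := by
  simp [deformedBracket]

lemma dB_add_left (x₁ x₂ y) :
    deformedBracket Φ k ℓ a ε ω m (x₁ + x₂) y
      = deformedBracket Φ k ℓ a ε ω m x₁ y + deformedBracket Φ k ℓ a ε ω m x₂ y := by
  unfold deformedBracket
  apply Finsupp.sum_add_index'
  · intro i; simp
  · intro i c₁ c₂; rw [← Finsupp.sum_add]; congr 1; funext j d
    rw [add_mul, add_smul]

lemma dB_add_right (x y₁ y₂) :
    deformedBracket Φ k ℓ a ε ω m x (y₁ + y₂)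
      = deformedBracket Φ k ℓ a ε ω m x y₁ + deformedBracket Φ k ℓ a ε ω m x y₂ := by
  unfold deformedBracket
  rw [← Finsupp.sum_add]
  apply Finsupp.sum_congr
  intro i _
  apply Finsupp.sum_add_index'
  · intro j; simp
  · intro j d₁ d₂; rw [mul_add, add_smul]

lemma dB_smul_left (c : MvLaurent k) (x y) :
    deformedBracket Φ k ℓ a ε ω m (c • x) y = c • deformedBracket Φ k ℓ a ε ω m x y := by
  unfold deformedBracket
  rw [Finsupp.sum_smul_index' (fun i => by simp), Finsupp.smul_sum]
  apply Finsupp.sum_congr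
  intro i _
  rw [Finsupp.smul_sum]
  apply Finsupp.sum_congr
  intro j _
  rw [smul_eq_mul, smul_smul, mul_assoc]

lemma dB_single_single (i j : ↥Φ.roots ⊕ Fin ℓ) (c d : MvLaurent k) :
    deformedBracket Φ k ℓ a ε ω m (Finsupp.single i c) (Finsupp.single j d)
      = (c * d) • deformedBracketIdx Φ k ℓ a ε ω m i j := by
  unfold deformedBracket
  rw [Finsupp.sum_single_index (by simp), Finsupp.sum_single_index (by simp)]

lemma dB_single_one_right (x) (l : ↥Φ.roots ⊕ Fin ℓ) :
    deformedBracket Φ k ℓ a ε ω m x (Finsupp.single l 1)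
      = x.sum fun p u => u • deformedBracketIdx Φ k ℓ a ε ω m p l := by
  unfold deformedBracket
  apply Finsupp.sum_congr
  intro p _
  rw [Finsupp.sum_single_index (by simp), mul_one]

lemma dB_single_right (x) (l : ↥Φ.roots ⊕ Fin ℓ) (e : MvLaurent k) :
    deformedBracket Φ k ℓ a ε ω m x (Finsupp.single l e)
      = e • deformedBracket Φ k ℓ a ε ω m x (Finsupp.single l 1) := by
  rw [dB_single_one_right, Finsupp.smul_sum]
  unfold deformedBracket
  apply Finsupp.sum_congr
  intro p _
  rw [Finsupp.sum_single_index (by simp), smul_smul, mul_comm e]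

lemma dB_sum_left {ι : Type*} (s : Finset ι) (g : ι → ((↥Φ.roots ⊕ Fin ℓ) →₀ MvLaurent k)) (y) :
    deformedBracket Φ k ℓ a ε ω m (∑ i ∈ s, g i) y
      = ∑ i ∈ s, deformedBracket Φ k ℓ a ε ω m (g i) y :=
  map_sum (AddMonoidHom.mk' (fun x => deformedBracket Φ k ℓ a ε ω m x y)
    (fun x₁ x₂ => dB_add_left Φ k ℓ a ε ω m x₁ x₂ y)) g s

/-- The twist map `x ↦ mapRange (laurentMonomial w) x`. -/
noncomputable def twist (k : ℕ) (w : Fin k → ℤ) (S : Type) :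
    (S →₀ ℂ) →+ (S →₀ MvLaurent k) :=
  Finsupp.mapRange.addMonoidHom (AddMonoidAlgebra.singleAddHom w)

lemma twist_single {k : ℕ} (w : Fin k → ℤ) {S : Type} (s : S) (c : ℂ) :
    twist k w S (Finsupp.single s c) = Finsupp.single s (laurentMonomial w c) := by
  simp [twist, laurentMonomial]

end Aux

section Key

variable {V : Type} [NormedAddCommGroup V] [InnerProductSpace ℝ V]
variable (Φ : ReducedRootSystem V) (k ℓ : ℕ) (a : Fin ℓ → V)
variable (ε : V → V → ℤ) (ω : V → V → Fin k → ℤ) (m : V → Fin ℓ → ℤ)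
variable (L : Type) [LieRing L] [LieAlgebra ℂ L] (b : Module.Basis (↥Φ.roots ⊕ Fin ℓ) ℂ L)

/-- The root attached to a basis index (`0` for Cartan indices). -/
def rho (Φ : ReducedRootSystem V) (ℓ : ℕ) : (↥Φ.roots ⊕ Fin ℓ) → V :=
  Sum.elim Subtype.val (fun _ => 0)

lemma rho_mem (s : ↥Φ.roots ⊕ Fin ℓ) : rho Φ ℓ s ∈ rootsZero Φ := by
  rcases s with α | r
  · exact Set.mem_insert_iff.2 (Or.inr α.2)
  · exact Set.mem_insert _ _

lemma keyH
    (hHH : ∀ r s : Fin ℓ, ⁅b (Sum.inr r), b (Sum.inr s)⁆ = 0)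
    (hHE : ∀ (r : Fin ℓ) (α : ↥Φ.roots),
      ⁅b (Sum.inr r), b (Sum.inl α)⁆
        = ((2 * ⟪(α : V), a r⟫ / ⟪a r, a r⟫ : ℝ) : ℂ) • b (Sum.inl α))
    (i : Fin ℓ) (l : ↥Φ.roots ⊕ Fin ℓ) (w : Fin k → ℤ) (c : ℂ) :
    deformedBracket Φ k ℓ a ε ω m (Finsupp.single (Sum.inr i) (laurentMonomial w c))
        (Finsupp.single l 1)
      = twist k w _ (b.repr ⁅c • b (Sum.inr i), b l⁆) := by
  rw [dB_single_single, mul_one, smul_lie]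
  rcases l with γ | r
  · rw [hHE i γ, smul_smul]
    show (laurentMonomial w c) •
        Finsupp.single (Sum.inl γ) (algebraMap ℝ (MvLaurent k) (2 * ⟪(γ : V), a i⟫ / ⟪a i, a i⟫)) = _
    rw [lm_algebraMap, Finsupp.smul_single', lm_mul, add_zero, map_smul, Module.Basis.repr_self,
      Finsupp.smul_single', mul_one, twist_single]
  · rw [hHH i r, smul_zero, map_zero, map_zero]
    show (laurentMonomial w c) • (0 : (↥Φ.roots ⊕ Fin ℓ) →₀ MvLaurent k) = 0
    rw [smul_zero]

lemma keyE
    (hHE : ∀ (r : Fin ℓ) (α : ↥Φ.roots),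
      ⁅b (Sum.inr r), b (Sum.inl α)⁆
        = ((2 * ⟪(α : V), a r⟫ / ⟪a r, a r⟫ : ℝ) : ℂ) • b (Sum.inl α))
    (hEE : ∀ (α β : ↥Φ.roots) (hs : (α : V) + (β : V) ∈ Φ.roots),
      ⁅b (Sum.inl α), b (Sum.inl β)⁆
        = (ε (α : V) (β : V) : ℂ) • b (Sum.inl ⟨(α : V) + (β : V), hs⟩))
    (hEE0 : ∀ α β : ↥Φ.roots, (α : V) + (β : V) ∉ rootsZero Φ →
      ⁅b (Sum.inl α), b (Sum.inl β)⁆ = 0)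
    (hEneg : ∀ α β : ↥Φ.roots, (α : V) + (β : V) = 0 →
      ⁅b (Sum.inl α), b (Sum.inl β)⁆
        = (ε (α : V) (β : V) : ℂ) • ∑ i : Fin ℓ, (m (α : V) i : ℂ) • b (Sum.inr i))
    (hω' : ∀ v : V, ω v 0 = 0)
    (p : ↥Φ.roots) (l : ↥Φ.roots ⊕ Fin ℓ) (w wc : Fin k → ℤ) (c : ℂ)
    (hw : (p : V) + rho Φ ℓ l ∈ rootsZero Φ → w = wc + ω (p : V) (rho Φ ℓ l)) :
    deformedBracket Φ k ℓ a ε ω m (Finsupp.single (Sum.inl p) (laurentMonomial wc c))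
        (Finsupp.single l 1)
      = twist k w _ (b.repr ⁅c • b (Sum.inl p), b l⁆) := by
  rw [dB_single_single, mul_one, smul_lie]
  rcases l with γ | r
  · simp only [rho, Sum.elim_inl] at hw
    by_cases hs : (p : V) + (γ : V) ∈ Φ.roots
    · have hw' : w = wc + ω (p : V) (γ : V) := hw (Set.mem_insert_iff.2 (Or.inr hs))
      rw [hEE p γ hs, smul_smul, map_smul, Module.Basis.repr_self, Finsupp.smul_single', mul_one,
        twist_single]
      simp only [deformedBracketIdx, dif_pos hs]
      rw [Finsupp.smul_single', lm_mul, hw']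
    · by_cases h0 : (p : V) + (γ : V) = 0
      · have hw' : w = wc + ω (p : V) (γ : V) := hw (by rw [h0]; exact Set.mem_insert _ _)
        rw [hEneg p γ h0, smul_smul, Finset.smul_sum, map_sum, map_sum]
        simp only [deformedBracketIdx, dif_neg hs, if_pos h0]
        rw [Finset.smul_sum]
        refine Finset.sum_congr rfl fun i _ => ?_
        rw [Finsupp.smul_single', lm_mul, hw', smul_smul, map_smul, Module.Basis.repr_self,
          Finsupp.smul_single', mul_one, twist_single, mul_assoc]
      · have hne : (p : V) + (γ : V) ∉ rootsZero Φ := by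
          simp [rootsZero, Set.mem_insert_iff, hs, h0]
        rw [hEE0 p γ hne, smul_zero, map_zero, map_zero]
        simp only [deformedBracketIdx, dif_neg hs, if_neg h0, smul_zero]
  · simp only [rho, Sum.elim_inr] at hw
    have hw' : w = wc := by
      rw [hw (by rw [add_zero]; exact Set.mem_insert_iff.2 (Or.inr p.2)), hω', add_zero]
    rw [← lie_skew, hHE r p, smul_neg, smul_smul, map_neg, map_smul, Module.Basis.repr_self,
      Finsupp.smul_single', mul_one, map_neg, twist_single]
    show (laurentMonomial wc c) •
        (- Finsupp.single (Sum.inl p) (algebraMap ℝ (MvLaurent k) (2 * ⟪(p : V), a r⟫ / ⟪a r, a r⟫))) = _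
    rw [lm_algebraMap, smul_neg, Finsupp.smul_single', lm_mul, add_zero, hw']

lemma lm_neg {k : ℕ} (w : Fin k → ℤ) (c : ℂ) :
    laurentMonomial w (-c) = - laurentMonomial w c := AddMonoidAlgebra.single_neg _ _

lemma lie_sum_left (L : Type) [LieRing L] {ι : Type*} (s : Finset ι) (f : ι → L) (y : L) :
    ⁅∑ i ∈ s, f i, y⁆ = ∑ i ∈ s, ⁅f i, y⁆ :=
  map_sum (AddMonoidHom.mk' (fun x => ⁅x, y⁆) (fun x x' => add_lie x x' y)) f s

lemma keyMain
    (hHH : ∀ r s : Fin ℓ, ⁅b (Sum.inr r), b (Sum.inr s)⁆ = 0)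
    (hHE : ∀ (r : Fin ℓ) (α : ↥Φ.roots),
      ⁅b (Sum.inr r), b (Sum.inl α)⁆
        = ((2 * ⟪(α : V), a r⟫ / ⟪a r, a r⟫ : ℝ) : ℂ) • b (Sum.inl α))
    (hEE : ∀ (α β : ↥Φ.roots) (hs : (α : V) + (β : V) ∈ Φ.roots),
      ⁅b (Sum.inl α), b (Sum.inl β)⁆
        = (ε (α : V) (β : V) : ℂ) • b (Sum.inl ⟨(α : V) + (β : V), hs⟩))
    (hEE0 : ∀ α β : ↥Φ.roots, (α : V) + (β : V) ∉ rootsZero Φ →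
      ⁅b (Sum.inl α), b (Sum.inl β)⁆ = 0)
    (hEneg : ∀ α β : ↥Φ.roots, (α : V) + (β : V) = 0 →
      ⁅b (Sum.inl α), b (Sum.inl β)⁆
        = (ε (α : V) (β : V) : ℂ) • ∑ i : Fin ℓ, (m (α : V) i : ℂ) • b (Sum.inr i))
    (hω : ∀ v : V, ω 0 v = 0) (hω' : ∀ v : V, ω v 0 = 0)
    (i j l : ↥Φ.roots ⊕ Fin ℓ) (w : Fin k → ℤ)
    (hw : rho Φ ℓ i + rho Φ ℓ j ∈ rootsZero Φ →
      rho Φ ℓ i + rho Φ ℓ j + rho Φ ℓ l ∈ rootsZero Φ →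
      w = ω (rho Φ ℓ i) (rho Φ ℓ j) + ω (rho Φ ℓ i + rho Φ ℓ j) (rho Φ ℓ l)) :
    deformedBracket Φ k ℓ a ε ω m (deformedBracketIdx Φ k ℓ a ε ω m i j) (Finsupp.single l 1)
      = twist k w _ (b.repr ⁅⁅b i, b j⁆, b l⁆) := by
  rcases i with α | r
  · rcases j with β | s
    · -- (E, E)
      simp only [rho, Sum.elim_inl] at hw
      by_cases hs : (α : V) + (β : V) ∈ Φ.roots
      · have h1 : deformedBracketIdx Φ k ℓ a ε ω m (Sum.inl α) (Sum.inl β)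
            = Finsupp.single (Sum.inl (⟨(α : V) + (β : V), hs⟩ : ↥Φ.roots))
                (laurentMonomial (ω (α : V) (β : V)) ((ε (α : V) (β : V) : ℂ))) := by
          simp only [deformedBracketIdx, dif_pos hs]
        rw [h1, hEE α β hs]
        exact keyE Φ k ℓ a ε ω m L b hHE hEE hEE0 hEneg hω'
          ⟨(α : V) + (β : V), hs⟩ l w (ω (α : V) (β : V)) _
          (fun hmem => hw (Set.mem_insert_iff.2 (Or.inr hs)) hmem)
      · by_cases h0 : (α : V) + (β : V) = 0
        · have hww : w = ω (α : V) (β : V) := by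
            have h2 := hw (by rw [h0]; exact Set.mem_insert _ _)
              (by rw [h0, zero_add]; exact rho_mem Φ ℓ l)
            rw [h2, h0, hω, add_zero]
          have h1 : deformedBracketIdx Φ k ℓ a ε ω m (Sum.inl α) (Sum.inl β)
              = ∑ i : Fin ℓ, Finsupp.single (Sum.inr i)
                  (laurentMonomial w ((ε (α : V) (β : V) : ℂ) * (m (α : V) i : ℂ))) := by
            simp only [deformedBracketIdx, dif_neg hs, if_pos h0, hww]
          rw [h1, dB_sum_left, hEneg α β h0, smul_lie, lie_sum_left L, Finset.smul_sum,
            map_sum, map_sum]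
          refine Finset.sum_congr rfl fun i _ => ?_
          rw [keyH Φ k ℓ a ε ω m L b hHH hHE i l w _, smul_lie, smul_lie, smul_smul]
        · have hne : (α : V) + (β : V) ∉ rootsZero Φ := by
            simp [rootsZero, Set.mem_insert_iff, hs, h0]
          have h1 : deformedBracketIdx Φ k ℓ a ε ω m (Sum.inl α) (Sum.inl β) = 0 := by
            simp only [deformedBracketIdx, dif_neg hs, if_neg h0]
          rw [h1, hEE0 α β hne, dB_zero_left, zero_lie, map_zero, map_zero]
    · -- (E, H)
      simp only [rho, Sum.elim_inl, Sum.elim_inr] at hw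
      have h1 : deformedBracketIdx Φ k ℓ a ε ω m (Sum.inl α) (Sum.inr s)
          = Finsupp.single (Sum.inl α)
              (laurentMonomial 0 (-((2 * ⟪(α : V), a s⟫ / ⟪a s, a s⟫ : ℝ) : ℂ))) := by
        simp only [deformedBracketIdx]
        rw [lm_algebraMap, lm_neg, Finsupp.single_neg]
      rw [h1, ← lie_skew (b (Sum.inl α)), hHE s α, ← neg_smul]
      exact keyE Φ k ℓ a ε ω m L b hHE hEE hEE0 hEneg hω' α l w 0 _
        (fun hmem => by
          have h2 := hw (by rw [add_zero]; exact Set.mem_insert_iff.2 (Or.inr α.2))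
            (by rw [add_zero]; exact hmem)
          rw [h2]; simp [hω', rho])
  · rcases j with β | s
    · -- (H, E)
      simp only [rho, Sum.elim_inl, Sum.elim_inr] at hw
      have h1 : deformedBracketIdx Φ k ℓ a ε ω m (Sum.inr r) (Sum.inl β)
          = Finsupp.single (Sum.inl β)
              (laurentMonomial 0 (((2 * ⟪(β : V), a r⟫ / ⟪a r, a r⟫ : ℝ) : ℂ))) := by
        simp only [deformedBracketIdx]
        rw [lm_algebraMap]
      rw [h1, hHE r β]
      exact keyE Φ k ℓ a ε ω m L b hHE hEE hEE0 hEneg hω' β l w 0 _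
        (fun hmem => by
          have h2 := hw (by rw [zero_add]; exact Set.mem_insert_iff.2 (Or.inr β.2))
            (by rw [zero_add]; exact hmem)
          rw [h2]; simp [hω, rho])
    · -- (H, H)
      have h1 : deformedBracketIdx Φ k ℓ a ε ω m (Sum.inr r) (Sum.inr s) = 0 := rfl
      rw [h1, hHH r s, dB_zero_left, zero_lie, map_zero, map_zero]

end Key

/-- Let `Φ` be a reduced root system with positive roots `Φ⁺` and simple
roots `Δ = {α₁,…,α_ℓ}` (cut out by a linear functional `f`), and let `𝔤 = L` be a complex
Lie algebra with basis `{e_α : α ∈ Φ} ∪ {h₁,…,h_ℓ}` whose bracket is given, for integer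
structure constants `ε(α,β)` with `ε(β,α) = -ε(α,β)`, by the Cartan–Weyl relations.
Then for every symmetric `ℤᵏ`-valued 2-cocycle `ω` on `Φ`, the `R`-bilinear bracket on the
free module over `R = ℂ[I₁^{±1},…,I_k^{±1}]` with the same basis, given by the same
relations with `ε(α,β)` replaced by `ε(α,β)·I^{ω(α|β)}`, satisfies the Jacobi identity. -/
theorem deformed_bracket_jacobi
    {V : Type} [NormedAddCommGroup V] [InnerProductSpace ℝ V] [FiniteDimensional ℝ V]
    (Φ : ReducedRootSystem V) (f : V →ₗ[ℝ] ℝ) (hf : ∀ α ∈ Φ.roots, f α ≠ 0)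
    (ℓ : ℕ) (a : Fin ℓ → V) (haInj : Function.Injective a)
    (haRange : Set.range a = simpleRoots Φ f)
    (ε : V → V → ℤ) (hskew : ∀ α β : V, ε β α = - ε α β)
    (m : V → Fin ℓ → ℤ) (hm : ∀ α ∈ Φ.roots, α = ∑ i : Fin ℓ, (m α i : ℝ) • a i)
    (L : Type) [LieRing L] [LieAlgebra ℂ L]
    (b : Module.Basis (↥Φ.roots ⊕ Fin ℓ) ℂ L)
    (hHH : ∀ r s : Fin ℓ, ⁅b (Sum.inr r), b (Sum.inr s)⁆ = 0)
    (hHE : ∀ (r : Fin ℓ) (α : ↥Φ.roots),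
      ⁅b (Sum.inr r), b (Sum.inl α)⁆
        = ((2 * ⟪(α : V), a r⟫ / ⟪a r, a r⟫ : ℝ) : ℂ) • b (Sum.inl α))
    (hEE : ∀ (α β : ↥Φ.roots) (hs : (α : V) + (β : V) ∈ Φ.roots),
      ⁅b (Sum.inl α), b (Sum.inl β)⁆
        = (ε (α : V) (β : V) : ℂ) • b (Sum.inl ⟨(α : V) + (β : V), hs⟩))
    (hEE0 : ∀ α β : ↥Φ.roots, (α : V) + (β : V) ∉ rootsZero Φ →
      ⁅b (Sum.inl α), b (Sum.inl β)⁆ = 0)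
    (hEneg : ∀ α β : ↥Φ.roots, (α : V) + (β : V) = 0 →
      ⁅b (Sum.inl α), b (Sum.inl β)⁆
        = (ε (α : V) (β : V) : ℂ) • ∑ i : Fin ℓ, (m (α : V) i : ℂ) • b (Sum.inr i))
    (k : ℕ) (ω : V → V → Fin k → ℤ)
    (hω : ∀ v : V, ω 0 v = 0) (hω' : ∀ v : V, ω v 0 = 0)
    (hsym : ∀ α ∈ rootsZero Φ, ∀ β ∈ rootsZero Φ, α + β ∈ rootsZero Φ → ω β α = ω α β)
    (hcoc : ∀ α ∈ rootsZero Φ, ∀ β ∈ rootsZero Φ, ∀ γ ∈ rootsZero Φ,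
      α + β ∈ rootsZero Φ → β + γ ∈ rootsZero Φ → α + β + γ ∈ rootsZero Φ →
      ω β γ - ω (α + β) γ + ω α (β + γ) - ω α β = 0) :
    ∀ x y z : (↥Φ.roots ⊕ Fin ℓ) →₀ MvLaurent k,
      deformedBracket Φ k ℓ a ε ω m (deformedBracket Φ k ℓ a ε ω m x y) z
        + deformedBracket Φ k ℓ a ε ω m (deformedBracket Φ k ℓ a ε ω m y z) x
        + deformedBracket Φ k ℓ a ε ω m (deformedBracket Φ k ℓ a ε ω m z x) y = 0 := by
  classical
  -- cocycle consequence: the "total exponent" is cyclically invariant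
  have pair : ∀ A B C : V, A ∈ rootsZero Φ → B ∈ rootsZero Φ → C ∈ rootsZero Φ →
      A + B ∈ rootsZero Φ → B + C ∈ rootsZero Φ → A + B + C ∈ rootsZero Φ →
      ω A B + ω (A + B) C = ω B C + ω (B + C) A := by
    intro A B C hA hB hC hAB hBC hσ
    have h1 := hcoc A hA B hB C hC hAB hBC hσ
    have h2 : ω A (B + C) = ω (B + C) A :=
      (hsym A hA (B + C) hBC (by rwa [← add_assoc])).symm
    funext x
    have t1 := congrFun h1 x
    have t2 := congrFun h2 x
    simp only [Pi.add_apply, Pi.sub_apply, Pi.zero_apply] at t1 t2 ⊢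
    omega
  -- choice of a common exponent for the three cyclic terms
  have wsel : ∀ A B C : V, A ∈ rootsZero Φ → B ∈ rootsZero Φ → C ∈ rootsZero Φ →
      ∃ w : Fin k → ℤ,
        (A + B ∈ rootsZero Φ → A + B + C ∈ rootsZero Φ → w = ω A B + ω (A + B) C) ∧
        (B + C ∈ rootsZero Φ → B + C + A ∈ rootsZero Φ → w = ω B C + ω (B + C) A) ∧
        (C + A ∈ rootsZero Φ → C + A + B ∈ rootsZero Φ → w = ω C A + ω (C + A) B) := by
    intro A B C hA hB hC
    by_cases c1 : A + B ∈ rootsZero Φ ∧ A + B + C ∈ rootsZero Φ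
    · refine ⟨ω A B + ω (A + B) C, fun _ _ => rfl, fun hBC _ => ?_, fun hCA hσ => ?_⟩
      · exact pair A B C hA hB hC c1.1 hBC c1.2
      · exact (pair C A B hC hA hB hCA c1.1 hσ).symm
    · by_cases c2 : B + C ∈ rootsZero Φ ∧ B + C + A ∈ rootsZero Φ
      · refine ⟨ω B C + ω (B + C) A, fun hAB hσ => absurd ⟨hAB, hσ⟩ c1, fun _ _ => rfl,
          fun hCA _ => ?_⟩
        exact pair B C A hB hC hA c2.1 hCA c2.2
      · by_cases c3 : C + A ∈ rootsZero Φ ∧ C + A + B ∈ rootsZero Φ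
        · exact ⟨ω C A + ω (C + A) B, fun hAB hσ => absurd ⟨hAB, hσ⟩ c1,
            fun hBC hσ => absurd ⟨hBC, hσ⟩ c2, fun _ _ => rfl⟩
        · exact ⟨0, fun hAB hσ => absurd ⟨hAB, hσ⟩ c1,
            fun hBC hσ => absurd ⟨hBC, hσ⟩ c2, fun hCA hσ => absurd ⟨hCA, hσ⟩ c3⟩
  have key := keyMain Φ k ℓ a ε ω m L b hHH hHE hEE hEE0 hEneg hω hω'
  -- Jacobi identity on basis indices
  have hsingles : ∀ i j l : ↥Φ.roots ⊕ Fin ℓ,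
      deformedBracket Φ k ℓ a ε ω m (deformedBracketIdx Φ k ℓ a ε ω m i j) (Finsupp.single l 1)
      + deformedBracket Φ k ℓ a ε ω m (deformedBracketIdx Φ k ℓ a ε ω m j l) (Finsupp.single i 1)
      + deformedBracket Φ k ℓ a ε ω m (deformedBracketIdx Φ k ℓ a ε ω m l i) (Finsupp.single j 1)
        = 0 := by
    intro i j l
    obtain ⟨w, hw1, hw2, hw3⟩ := wsel (rho Φ ℓ i) (rho Φ ℓ j) (rho Φ ℓ l)
      (rho_mem Φ ℓ i) (rho_mem Φ ℓ j) (rho_mem Φ ℓ l)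
    rw [key i j l w hw1, key j l i w hw2, key l i j w hw3]
    have hJ : ⁅⁅b i, b j⁆, b l⁆ + ⁅⁅b j, b l⁆, b i⁆ + ⁅⁅b l, b i⁆, b j⁆ = 0 := by
      have h := lie_jacobi (b l) (b i) (b j)
      have e1 : ⁅⁅b i, b j⁆, b l⁆ = -⁅b l, ⁅b i, b j⁆⁆ := (lie_skew _ _).symm
      have e2 : ⁅⁅b j, b l⁆, b i⁆ = -⁅b i, ⁅b j, b l⁆⁆ := (lie_skew _ _).symm
      have e3 : ⁅⁅b l, b i⁆, b j⁆ = -⁅b j, ⁅b l, b i⁆⁆ := (lie_skew _ _).symm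
      rw [e1, e2, e3, ← neg_add, ← neg_add, h, neg_zero]
    simp only [← map_add]
    rw [hJ, map_zero, map_zero]
  -- Jacobi identity on single-supported elements
  have hsc : ∀ (i j l : ↥Φ.roots ⊕ Fin ℓ) (c d e : MvLaurent k),
      deformedBracket Φ k ℓ a ε ω m
          (deformedBracket Φ k ℓ a ε ω m (Finsupp.single i c) (Finsupp.single j d))
          (Finsupp.single l e)
      + deformedBracket Φ k ℓ a ε ω m
          (deformedBracket Φ k ℓ a ε ω m (Finsupp.single j d) (Finsupp.single l e))
          (Finsupp.single i c)
      + deformedBracket Φ k ℓ a ε ω m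
          (deformedBracket Φ k ℓ a ε ω m (Finsupp.single l e) (Finsupp.single i c))
          (Finsupp.single j d) = 0 := by
    intro i j l c d e
    rw [dB_single_single Φ k ℓ a ε ω m i j, dB_single_single Φ k ℓ a ε ω m j l,
      dB_single_single Φ k ℓ a ε ω m l i,
      dB_single_right Φ k ℓ a ε ω m _ l, dB_single_right Φ k ℓ a ε ω m _ i,
      dB_single_right Φ k ℓ a ε ω m _ j,
      dB_smul_left, dB_smul_left, dB_smul_left,
      smul_smul, smul_smul, smul_smul,
      show e * (c * d) = c * d * e by ring,
      show c * (d * e) = c * d * e by ring,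
      show d * (e * c) = c * d * e by ring,
      ← smul_add, ← smul_add, hsingles i j l, smul_zero]
  -- trilinearity reduction
  have J1 : ∀ x x' y z : (↥Φ.roots ⊕ Fin ℓ) →₀ MvLaurent k,
      deformedBracket Φ k ℓ a ε ω m (deformedBracket Φ k ℓ a ε ω m (x + x') y) z
        + deformedBracket Φ k ℓ a ε ω m (deformedBracket Φ k ℓ a ε ω m y z) (x + x')
        + deformedBracket Φ k ℓ a ε ω m (deformedBracket Φ k ℓ a ε ω m z (x + x')) y
      = (deformedBracket Φ k ℓ a ε ω m (deformedBracket Φ k ℓ a ε ω m x y) z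
        + deformedBracket Φ k ℓ a ε ω m (deformedBracket Φ k ℓ a ε ω m y z) x
        + deformedBracket Φ k ℓ a ε ω m (deformedBracket Φ k ℓ a ε ω m z x) y)
      + (deformedBracket Φ k ℓ a ε ω m (deformedBracket Φ k ℓ a ε ω m x' y) z
        + deformedBracket Φ k ℓ a ε ω m (deformedBracket Φ k ℓ a ε ω m y z) x'
        + deformedBracket Φ k ℓ a ε ω m (deformedBracket Φ k ℓ a ε ω m z x') y) := by
    intro x x' y z
    simp only [dB_add_left, dB_add_right]
    abel
  have J2 : ∀ x y y' z : (↥Φ.roots ⊕ Fin ℓ) →₀ MvLaurent k,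
      deformedBracket Φ k ℓ a ε ω m (deformedBracket Φ k ℓ a ε ω m x (y + y')) z
        + deformedBracket Φ k ℓ a ε ω m (deformedBracket Φ k ℓ a ε ω m (y + y') z) x
        + deformedBracket Φ k ℓ a ε ω m (deformedBracket Φ k ℓ a ε ω m z x) (y + y')
      = (deformedBracket Φ k ℓ a ε ω m (deformedBracket Φ k ℓ a ε ω m x y) z
        + deformedBracket Φ k ℓ a ε ω m (deformedBracket Φ k ℓ a ε ω m y z) x
        + deformedBracket Φ k ℓ a ε ω m (deformedBracket Φ k ℓ a ε ω m z x) y)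
      + (deformedBracket Φ k ℓ a ε ω m (deformedBracket Φ k ℓ a ε ω m x y') z
        + deformedBracket Φ k ℓ a ε ω m (deformedBracket Φ k ℓ a ε ω m y' z) x
        + deformedBracket Φ k ℓ a ε ω m (deformedBracket Φ k ℓ a ε ω m z x) y') := by
    intro x y y' z
    simp only [dB_add_left, dB_add_right]
    abel
  have J3 : ∀ x y z z' : (↥Φ.roots ⊕ Fin ℓ) →₀ MvLaurent k,
      deformedBracket Φ k ℓ a ε ω m (deformedBracket Φ k ℓ a ε ω m x y) (z + z')
        + deformedBracket Φ k ℓ a ε ω m (deformedBracket Φ k ℓ a ε ω m y (z + z')) x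
        + deformedBracket Φ k ℓ a ε ω m (deformedBracket Φ k ℓ a ε ω m (z + z') x) y
      = (deformedBracket Φ k ℓ a ε ω m (deformedBracket Φ k ℓ a ε ω m x y) z
        + deformedBracket Φ k ℓ a ε ω m (deformedBracket Φ k ℓ a ε ω m y z) x
        + deformedBracket Φ k ℓ a ε ω m (deformedBracket Φ k ℓ a ε ω m z x) y)
      + (deformedBracket Φ k ℓ a ε ω m (deformedBracket Φ k ℓ a ε ω m x y) z'
        + deformedBracket Φ k ℓ a ε ω m (deformedBracket Φ k ℓ a ε ω m y z') x
        + deformedBracket Φ k ℓ a ε ω m (deformedBracket Φ k ℓ a ε ω m z' x) y) := by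
    intro x y z z'
    simp only [dB_add_left, dB_add_right]
    abel
  have step3 : ∀ (i j : ↥Φ.roots ⊕ Fin ℓ) (c d : MvLaurent k)
      (z : (↥Φ.roots ⊕ Fin ℓ) →₀ MvLaurent k),
      deformedBracket Φ k ℓ a ε ω m
          (deformedBracket Φ k ℓ a ε ω m (Finsupp.single i c) (Finsupp.single j d)) z
      + deformedBracket Φ k ℓ a ε ω m
          (deformedBracket Φ k ℓ a ε ω m (Finsupp.single j d) z) (Finsupp.single i c)
      + deformedBracket Φ k ℓ a ε ω m
          (deformedBracket Φ k ℓ a ε ω m z (Finsupp.single i c)) (Finsupp.single j d) = 0 := by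
    intro i j c d z
    induction z using Finsupp.induction with
    | zero => simp [dB_zero_left, dB_zero_right]
    | single_add l e z hl he ih =>
      rw [J3, ih, hsc i j l c d e, add_zero]
  have step2 : ∀ (i : ↥Φ.roots ⊕ Fin ℓ) (c : MvLaurent k)
      (y z : (↥Φ.roots ⊕ Fin ℓ) →₀ MvLaurent k),
      deformedBracket Φ k ℓ a ε ω m
          (deformedBracket Φ k ℓ a ε ω m (Finsupp.single i c) y) z
      + deformedBracket Φ k ℓ a ε ω m
          (deformedBracket Φ k ℓ a ε ω m y z) (Finsupp.single i c)
      + deformedBracket Φ k ℓ a ε ω m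
          (deformedBracket Φ k ℓ a ε ω m z (Finsupp.single i c)) y = 0 := by
    intro i c y z
    induction y using Finsupp.induction with
    | zero => simp [dB_zero_left, dB_zero_right]
    | single_add j d y hj hd ih =>
      rw [J2, ih, step3 i j c d z, add_zero]
  intro x y z
  induction x using Finsupp.induction with
  | zero => simp [dB_zero_left, dB_zero_right]
  | single_add i c x hi hc ih =>
    rw [J1, ih, step2 i c y z, add_zero]
end

section
/- Let Φ be a reduced root system. The boundary operator ∂ⁿ on root-system chains satisfies ∂ⁿ ∘ ∂ⁿ⁺¹ = 0 as a map C_{n+2}(Φ) → C_n(Φ), for every n ≥ 1; moreover ∂ⁿ is well defined on chains, i.e., it sends every tuple with some entry equal to 0 to the zero chain. -/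
open scoped RealInnerProductSpace

variable {V : Type} [NormedAddCommGroup V] [InnerProductSpace ℝ V]

/-- Contraction of a tuple at position `j` (adding the `j`-th and `(j+1)`-st entries). -/
def contractAt (l : List V) (j : ℕ) : List V :=
  l.take j ++ (l.getD j 0 + l.getD (j + 1) 0) :: l.drop (j + 2)

/-- `IsRootChainAux Φ n l`: the tuple `l` of length `n` is a generator of `T_n(Φ)`:
`T₁(Φ) = Φ₀`, and an `n`-tuple with entries in `Φ₀` lies in `T_n(Φ)` iff all its
contractions lie in `T_{n-1}(Φ)`. -/
def IsRootChainAux (Φ : ReducedRootSystem V) : ℕ → List V → Prop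
  | 0, _ => False
  | 1, l => ∃ r ∈ rootsZero Φ, l = [r]
  | n + 2, l => l.length = n + 2 ∧ (∀ r ∈ l, r ∈ rootsZero Φ) ∧
      ∀ j, j + 1 < l.length → IsRootChainAux Φ (n + 1) (contractAt l j)

/-- `l` is a generator of `T_{l.length}(Φ)`. -/
def IsRootChain (Φ : ReducedRootSystem V) (l : List V) : Prop := IsRootChainAux Φ l.length l

open Classical in
/-- The chain generator associated with a tuple, in the free ℤ-module on tuples;
tuples containing `0` are identified with the zero chain. -/
noncomputable def chainGen (l : List V) : List V →₀ ℤ :=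
  if (0 : V) ∈ l then 0 else Finsupp.single l 1

/-- The boundary of a generator:
`∂ⁿ[r₀|⋯|rₙ] = [r₁|⋯|rₙ] + ∑_{j=1}^n (-1)^j [r₀|⋯|r_{j-1}+rⱼ|⋯|rₙ] - (-1)^n [r₀|⋯|r_{n-1}]`. -/
noncomputable def bdGen (l : List V) : List V →₀ ℤ :=
  chainGen l.tail
    + (∑ j ∈ Finset.range (l.length - 1), ((-1 : ℤ) ^ (j + 1)) • chainGen (contractAt l j))
    - ((-1 : ℤ) ^ (l.length - 1)) • chainGen l.dropLast

/-- The boundary operator, extended ℤ-linearly. -/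
noncomputable def bd : (List V →₀ ℤ) →ₗ[ℤ] (List V →₀ ℤ) :=
  Finsupp.lsum ℤ fun l => LinearMap.toSpanSingleton ℤ (List V →₀ ℤ) (bdGen l)

/-- `C_n(Φ)`: the ℤ-linear span of the generators of `T_n(Φ)`. -/
noncomputable def chainMod (Φ : ReducedRootSystem V) (n : ℕ) : Submodule ℤ (List V →₀ ℤ) :=
  Submodule.span ℤ {x | ∃ l : List V, l.length = n ∧ IsRootChain Φ l ∧ x = chainGen l}

set_option linter.unusedSectionVars false

-- ===== auxiliary lemmas =====

lemma chainGen_of_mem {l : List V} (h : (0 : V) ∈ l) : chainGen l = 0 := by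
  rw [chainGen, if_pos h]

lemma chainGen_of_not_mem {l : List V} (h : (0 : V) ∉ l) :
    chainGen l = Finsupp.single l 1 := by
  rw [chainGen, if_neg h]

/-- Linear map `single t ↦ chainGen (a :: t)`. -/
noncomputable def cmap (a : V) : (List V →₀ ℤ) →ₗ[ℤ] (List V →₀ ℤ) :=
  Finsupp.lsum ℤ fun t => LinearMap.toSpanSingleton ℤ (List V →₀ ℤ) (chainGen (a :: t))

noncomputable def Emap (a : V) : (List V →₀ ℤ) →ₗ[ℤ] (List V →₀ ℤ) :=
  Finsupp.lsum ℤ fun t => LinearMap.toSpanSingleton ℤ (List V →₀ ℤ)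
    (chainGen t - chainGen ((a + t.getD 0 0) :: t.tail) + chainGen (a :: t.tail))

lemma cmap_single (a : V) (t : List V) : cmap a (Finsupp.single t 1) = chainGen (a :: t) := by
  rw [cmap, Finsupp.lsum_single, LinearMap.toSpanSingleton_apply, one_smul]

lemma cmap_chainGen (a : V) (t : List V) : cmap a (chainGen t) = chainGen (a :: t) := by
  by_cases h : (0 : V) ∈ t
  · rw [chainGen_of_mem h, map_zero, chainGen_of_mem (List.mem_cons_of_mem a h)]
  · rw [chainGen_of_not_mem h, cmap_single]

lemma Emap_single (a : V) (t : List V) :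
    Emap a (Finsupp.single t 1)
      = chainGen t - chainGen ((a + t.getD 0 0) :: t.tail) + chainGen (a :: t.tail) := by
  rw [Emap, Finsupp.lsum_single, LinearMap.toSpanSingleton_apply, one_smul]

lemma Emap_chainGen (a : V) (t : List V) :
    Emap a (chainGen t)
      = chainGen t - chainGen ((a + t.getD 0 0) :: t.tail) + chainGen (a :: t.tail) := by
  by_cases h : (0 : V) ∈ t
  · rw [chainGen_of_mem h, map_zero]
    cases t with
    | nil => simp at h
    | cons x s =>
      simp only [List.getD_cons_zero, List.tail_cons, chainGen_of_mem h]
      rcases List.mem_cons.mp h with hx | hs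
      · rw [← hx, add_zero]; abel
      · rw [chainGen_of_mem (show (0:V) ∈ (a + x) :: s from List.mem_cons_of_mem _ hs),
          chainGen_of_mem (show (0:V) ∈ a :: s from List.mem_cons_of_mem _ hs)]
        abel
  · rw [chainGen_of_not_mem h, Emap_single, chainGen_of_not_mem h]

lemma Emap_cmap (a h : V) (x : List V →₀ ℤ) :
    Emap a (cmap h x) = cmap h x - cmap (a + h) x + cmap a x := by
  induction x using Finsupp.induction_linear with
  | zero => simp
  | add f g hf hg => simp [map_add, hf, hg]; abel
  | single t k =>
    have h1 : (Finsupp.single t k : List V →₀ ℤ) = k • Finsupp.single t 1 := by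
      simp [Finsupp.smul_single]
    rw [h1]
    simp only [map_smul, cmap_single, Emap_chainGen, List.getD_cons_zero, List.tail_cons]
    rw [smul_add, smul_sub]

lemma contractAt_cons_zero (a : V) (m : List V) :
    contractAt (a :: m) 0 = (a + m.getD 0 0) :: m.tail := by
  simp [contractAt, List.drop_succ_cons, List.drop_one]

lemma contractAt_cons_succ (a : V) (m : List V) (j : ℕ) :
    contractAt (a :: m) (j + 1) = a :: contractAt m j := by
  simp [contractAt, List.take_succ_cons, List.getD_cons_succ, List.drop_succ_cons]

lemma contractAt_ne_nil (l : List V) (j : ℕ) : contractAt l j ≠ [] := by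
  simp [contractAt]

lemma bdGen_nil : bdGen ([] : List V) = 0 := by
  simp [bdGen]

lemma bdGen_singleton (r : V) : bdGen [r] = 0 := by
  simp [bdGen]

lemma star (a : V) (m : List V) (hm : m ≠ []) :
    bdGen (a :: m) = chainGen m - chainGen ((a + m.getD 0 0) :: m.tail)
      + chainGen (a :: m.tail) - cmap a (bdGen m) := by
  obtain ⟨k, hk⟩ : ∃ k, m.length = k + 1 := by
    cases m with
    | nil => exact absurd rfl hm
    | cons x t => exact ⟨t.length, rfl⟩
  unfold bdGen
  rw [map_sub, map_add, map_sum, cmap_chainGen]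
  simp only [List.length_cons, hk, Nat.add_sub_cancel, List.tail_cons,
    List.dropLast_cons_of_ne_nil hm, map_smul, cmap_chainGen]
  rw [Finset.sum_range_succ']
  simp only [contractAt_cons_succ, contractAt_cons_zero, pow_succ, pow_zero, one_mul,
    mul_neg_one, neg_neg, neg_smul, one_smul, Finset.sum_neg_distrib]
  abel

lemma bdGen_of_mem : ∀ l : List V, (0 : V) ∈ l → bdGen l = 0 := by
  intro l
  induction l with
  | nil => intro h; simp at h
  | cons a m ih =>
    intro h
    cases m with
    | nil =>
      simp only [List.mem_singleton] at h
      rw [← h]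
      exact bdGen_singleton 0
    | cons x s =>
      rw [star a (x :: s) (List.cons_ne_nil x s)]
      simp only [List.getD_cons_zero, List.tail_cons]
      by_cases ha : a = 0
      · subst ha
        rw [zero_add, chainGen_of_mem (List.mem_cons_self : (0:V) ∈ 0 :: s)]
        have hc0 : ∀ y : List V →₀ ℤ, cmap (0 : V) y = 0 := by
          intro y
          induction y using Finsupp.induction_linear with
          | zero => simp
          | add f g hf hg => rw [map_add, hf, hg, add_zero]
          | single t k =>
            have h1 : (Finsupp.single t k : List V →₀ ℤ) = k • Finsupp.single t 1 := by
              simp [Finsupp.smul_single]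
            rw [h1, map_smul, cmap_single, chainGen_of_mem (List.mem_cons_self : (0:V) ∈ 0 :: t), smul_zero]
        rw [hc0]
        abel
      · have hm : (0 : V) ∈ x :: s := by
          rcases List.mem_cons.mp h with h' | h'
          · exact absurd h'.symm ha
          · exact h'
        rw [ih hm, map_zero, chainGen_of_mem hm, sub_zero]
        by_cases hs : (0 : V) ∈ s
        · rw [chainGen_of_mem (show (0:V) ∈ (a + x) :: s from List.mem_cons_of_mem _ hs),
            chainGen_of_mem (show (0:V) ∈ a :: s from List.mem_cons_of_mem _ hs)]
          abel
        · have hx : x = 0 := by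
            rcases List.mem_cons.mp hm with h' | h'
            · exact h'.symm
            · exact absurd h' hs
          rw [hx, add_zero]
          abel

lemma bd_single (l : List V) : bd (Finsupp.single l 1) = bdGen l := by
  rw [bd, Finsupp.lsum_single, LinearMap.toSpanSingleton_apply, one_smul]

lemma bd_chainGen (l : List V) : bd (chainGen l) = bdGen l := by
  by_cases h : (0 : V) ∈ l
  · rw [chainGen_of_mem h, map_zero, bdGen_of_mem l h]
  · rw [chainGen_of_not_mem h, bd_single]

lemma bd_cmap (a : V) (x : List V →₀ ℤ)
    (hx : x ∈ Submodule.span ℤ {y : List V →₀ ℤ | ∃ t : List V, t ≠ [] ∧ y = chainGen t}) :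
    bd (cmap a x) = Emap a x - cmap a (bd x) := by
  induction hx using Submodule.span_induction with
  | mem y hy =>
    obtain ⟨t, ht, rfl⟩ := hy
    rw [cmap_chainGen, bd_chainGen, bd_chainGen, star a t ht, Emap_chainGen]
  | zero => simp
  | add f g hf hg ihf ihg => simp only [map_add, ihf, ihg]; abel
  | smul k f hf ihf => rw [map_smul, map_smul, ihf, map_smul, map_smul, map_smul, smul_sub]

lemma bdGen_mem_span (m : List V) (hm : 2 ≤ m.length) :
    bdGen m ∈ Submodule.span ℤ {y : List V →₀ ℤ | ∃ t : List V, t ≠ [] ∧ y = chainGen t} := by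
  have hmem : ∀ t : List V, t ≠ [] →
      chainGen t ∈ Submodule.span ℤ
        {y : List V →₀ ℤ | ∃ t : List V, t ≠ [] ∧ y = chainGen t} :=
    fun t ht => Submodule.subset_span ⟨t, ht, rfl⟩
  rw [bdGen]
  refine Submodule.sub_mem _ (Submodule.add_mem _ ?_ ?_) (Submodule.smul_mem _ _ ?_)
  · refine hmem _ ?_
    intro h
    have := congrArg List.length h
    simp only [List.length_tail, List.length_nil] at this
    omega
  · exact Submodule.sum_mem _ fun j _ => Submodule.smul_mem _ _ (hmem _ (contractAt_ne_nil m j))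
  · refine hmem _ ?_
    intro h
    have := congrArg List.length h
    simp only [List.length_dropLast, List.length_nil] at this
    omega

lemma bd_bdGen : ∀ l : List V, bd (bdGen l) = 0 := by
  intro l
  induction l with
  | nil => rw [bdGen_nil, map_zero]
  | cons a m ih =>
    cases m with
    | nil => rw [bdGen_singleton, map_zero]
    | cons h m' =>
      cases m' with
      | nil =>
        rw [star a [h] (List.cons_ne_nil h []), bdGen_singleton, map_zero, sub_zero,
          map_add, map_sub, bd_chainGen, bd_chainGen, bd_chainGen]
        simp [bdGen_singleton]
      | cons x s =>
        rw [star a (h :: x :: s) (List.cons_ne_nil _ _)]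
        simp only [List.getD_cons_zero, List.tail_cons]
        rw [map_sub, map_add, map_sub, bd_chainGen, bd_chainGen, bd_chainGen,
          bd_cmap a _ (bdGen_mem_span _ (by simp)), ih, map_zero, sub_zero]
        rw [star h (x :: s) (List.cons_ne_nil _ _), star (a + h) (x :: s) (List.cons_ne_nil _ _),
          star a (x :: s) (List.cons_ne_nil _ _)]
        simp only [map_sub, map_add, Emap_chainGen, Emap_cmap, List.getD_cons_zero,
          List.tail_cons]
        simp only [add_assoc]
        abel

/-- The boundary operator on root-system chains satisfies
`∂ⁿ ∘ ∂ⁿ⁺¹ = 0` as a map `C_{n+2}(Φ) → C_n(Φ)` for every `n ≥ 1`; moreover `∂` is well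
defined on chains: it sends every tuple with some entry equal to `0` to the zero chain. -/
theorem boundary_squared_eq_zero
    {V : Type} [NormedAddCommGroup V] [InnerProductSpace ℝ V] [FiniteDimensional ℝ V]
    (Φ : ReducedRootSystem V) (n : ℕ) (hn : 1 ≤ n) :
    (∀ x ∈ chainMod Φ (n + 2), bd (bd x) = 0) ∧
    (∀ l : List V, l.length = n + 1 → (0 : V) ∈ l → bdGen l = 0) := by
  have bd_bd : ∀ x : List V →₀ ℤ, bd (bd x) = 0 := by
    intro x
    induction x using Finsupp.induction_linear with
    | zero => simp
    | add f g hf hg => rw [map_add, map_add, hf, hg, add_zero]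
    | single l k =>
      have h1 : (Finsupp.single l k : List V →₀ ℤ) = k • Finsupp.single l 1 := by
        simp [Finsupp.smul_single]
      rw [h1, map_smul, bd_single, map_smul, bd_bdGen, smul_zero]
  exact ⟨fun x _ => bd_bd x, fun l _ hl => bdGen_of_mem l hl⟩
end

section
/- Let Φ be a reduced root system with positive roots Φ⁺ and simple roots Δ, and let αᵢ, αⱼ ∈ Δ be distinct simple roots. If β ∈ Φ is a root such that β − αᵢ and β − αⱼ are each either roots or zero, then β − αᵢ − αⱼ is a root or zero. -/
open scoped RealInnerProductSpace

variable {V : Type} [NormedAddCommGroup V] [InnerProductSpace ℝ V]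

lemma RRS.inner_self_pos' {x : V} (h : x ≠ 0) : 0 < ⟪x, x⟫ :=
  lt_of_le_of_ne real_inner_self_nonneg (Ne.symm (inner_self_ne_zero.mpr h))

lemma RRS.neg_mem (Φ : ReducedRootSystem V) {α : V} (hα : α ∈ Φ.roots) : -α ∈ Φ.roots := by
  have h := Φ.reflect_mem α hα α hα
  have hne : ⟪α, α⟫ ≠ 0 := inner_self_ne_zero.mpr (Φ.nonzero α hα)
  have h2 : 2 * ⟪α, α⟫ / ⟪α, α⟫ = (2 : ℝ) := by field_simp
  rw [h2] at h
  have : α - (2 : ℝ) • α = -α := by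
    rw [two_smul]; abel
  rwa [this] at h

/-- Key lemma: if `α ≠ β` are roots with positive inner product, `α - β` is a root. -/
lemma RRS.sub_mem (Φ : ReducedRootSystem V) {α β : V} (hα : α ∈ Φ.roots) (hβ : β ∈ Φ.roots)
    (hne : α ≠ β) (hpos : 0 < ⟪α, β⟫) : α - β ∈ Φ.roots := by
  obtain ⟨n, hn⟩ := Φ.integral β hβ α hα
  obtain ⟨m, hm⟩ := Φ.integral α hα β hβ
  have haa : 0 < ⟪α, α⟫ := RRS.inner_self_pos' (Φ.nonzero α hα)
  have hbb : 0 < ⟪β, β⟫ := RRS.inner_self_pos' (Φ.nonzero β hβ)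
  have hba : ⟪β, α⟫ = ⟪α, β⟫ := (real_inner_comm β α).symm
  have hnpos : (0 : ℝ) < (n : ℝ) := by
    rw [← hn]; exact div_pos (by linarith) hbb
  have hmpos : (0 : ℝ) < (m : ℝ) := by
    rw [← hm, hba]; exact div_pos (by linarith) haa
  have hn1 : 1 ≤ n := by exact_mod_cast hnpos
  have hm1 : 1 ≤ m := by exact_mod_cast hmpos
  have hCS : ⟪α, β⟫ * ⟪α, β⟫ ≤ ⟪α, α⟫ * ⟪β, β⟫ := real_inner_mul_inner_self_le α β
  have hkey : (n : ℝ) * (m : ℝ) * (⟪α, α⟫ * ⟪β, β⟫) = 4 * (⟪α, β⟫ * ⟪α, β⟫) := by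
    rw [← hn, ← hm, hba]
    field_simp
    ring
  have hnm4 : (n : ℝ) * (m : ℝ) ≤ 4 := by nlinarith [mul_pos haa hbb, hCS, hkey]
  have hnm4' : n * m ≤ 4 := by exact_mod_cast hnm4
  rcases eq_or_lt_of_le hn1 with h1 | h1
  · -- n = 1 : reflect α along β
    have h := Φ.reflect_mem β hβ α hα
    rw [hn, ← h1] at h
    simpa using h
  rcases eq_or_lt_of_le hm1 with h2 | h2
  · -- m = 1 : reflect β along α
    have h := Φ.reflect_mem α hα β hβ
    rw [hm, ← h2] at h
    simp only [Int.cast_one, one_smul] at h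
    have := RRS.neg_mem Φ h
    rwa [neg_sub] at this
  -- otherwise n ≥ 2, m ≥ 2, so n = m = 2
  have hn2 : n = 2 := by nlinarith
  have hm2 : m = 2 := by nlinarith
  -- then ⟪α,β⟫ = ⟪β,β⟫ = ⟪α,α⟫, forcing α = β
  exfalso
  have e1 : ⟪α, β⟫ = ⟪β, β⟫ := by
    have := hn; rw [hn2] at this
    push_cast at this
    field_simp at this
    linarith
  have e2 : ⟪α, β⟫ = ⟪α, α⟫ := by
    have := hm; rw [hm2] at this
    push_cast at this
    field_simp at this
    linarith [hba]
  have : ⟪α - β, α - β⟫ = 0 := by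
    rw [real_inner_sub_sub_self]
    linarith
  have : α - β = 0 := inner_self_eq_zero.mp this
  exact hne (sub_eq_zero.mp this)

/-- The difference of two distinct simple roots is not a root. -/
lemma RRS.simple_sub_not_mem (Φ : ReducedRootSystem V) (f : V →ₗ[ℝ] ℝ)
    (hf : ∀ α ∈ Φ.roots, f α ≠ 0)
    {αi αj : V} (hi : αi ∈ simpleRoots Φ f) (hj : αj ∈ simpleRoots Φ f) (hij : αi ≠ αj) :
    αi - αj ∉ Φ.roots := by
  intro h
  rcases lt_or_gt_of_ne (hf _ h) with hneg | hpos
  · -- f (αi - αj) < 0 : αj = (αj - αi) + αi is a sum of two positive roots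
    have h' : αj - αi ∈ Φ.roots := by
      have := RRS.neg_mem Φ h
      rwa [neg_sub] at this
    refine hj.2 ⟨αj - αi, ⟨h', ?_⟩, αi, hi.1, by abel⟩
    have : f (αj - αi) = -(f (αi - αj)) := by
      rw [show αj - αi = -(αi - αj) by abel, map_neg]
    rw [this]; linarith
  · -- f (αi - αj) > 0 : αi = (αi - αj) + αj is a sum of two positive roots
    exact hi.2 ⟨αi - αj, ⟨h, hpos⟩, αj, hj.1, by abel⟩

/-- If `αi ≠ αj` are distinct simple roots and `β` is a root such that
`β - αi` and `β - αj` are each roots or zero, then `β - αi - αj` is a root or zero. -/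
theorem root_sub_two_simple_roots
    {V : Type} [NormedAddCommGroup V] [InnerProductSpace ℝ V] [FiniteDimensional ℝ V]
    (Φ : ReducedRootSystem V) (f : V →ₗ[ℝ] ℝ) (hf : ∀ α ∈ Φ.roots, f α ≠ 0)
    (αi αj : V) (hαi : αi ∈ simpleRoots Φ f) (hαj : αj ∈ simpleRoots Φ f) (hij : αi ≠ αj)
    (β : V) (hβ : β ∈ Φ.roots)
    (hβi : β - αi ∈ rootsZero Φ) (hβj : β - αj ∈ rootsZero Φ) :
    β - αi - αj ∈ rootsZero Φ := by
  have hnotij : αi - αj ∉ Φ.roots := RRS.simple_sub_not_mem Φ f hf hαi hαj hij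
  have hnotji : αj - αi ∉ Φ.roots := RRS.simple_sub_not_mem Φ f hf hαj hαi hij.symm
  have hβi' : β - αi ∈ Φ.roots := by
    rcases hβi with h0 | h
    · -- β = αi, so αi - αj ∈ rootsZero, impossible
      exfalso
      have hβeq : β = αi := sub_eq_zero.mp h0
      rcases hβj with h0' | h'
      · have hβeq' : β = αj := sub_eq_zero.mp h0'
        exact hij (hβeq ▸ hβeq')
      · exact hnotij (hβeq ▸ h')
    · exact h
  have hβj' : β - αj ∈ Φ.roots := by
    rcases hβj with h0 | h
    · exfalso
      have hβeq : β = αj := sub_eq_zero.mp h0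
      exact hnotji (hβeq ▸ hβi')
    · exact h
  by_cases h1 : 0 < ⟪β - αi, αj⟫
  · by_cases heq : β - αi = αj
    · left
      rw [heq]; abel
    · right
      exact RRS.sub_mem Φ hβi' hαj.1.1 heq h1
  by_cases h2 : 0 < ⟪β - αj, αi⟫
  · by_cases heq : β - αj = αi
    · left
      rw [show β - αi - αj = β - αj - αi by abel, heq]; abel
    · right
      have := RRS.sub_mem Φ hβj' hαi.1.1 heq h2
      rwa [show β - αj - αi = β - αi - αj by abel] at this
  -- contradiction case
  exfalso
  push_neg at h1 h2
  have hij' : ⟪β - αi, β - αj⟫ ≤ 0 := by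
    by_contra h3
    push_neg at h3
    have hne : β - αi ≠ β - αj := fun h => hij (sub_right_injective h)
    have := RRS.sub_mem Φ hβi' hβj' hne h3
    rw [show β - αi - (β - αj) = αj - αi by abel] at this
    exact hnotji this
  have hinn : ⟪αi, αj⟫ ≤ 0 := by
    by_contra h4
    push_neg at h4
    exact hnotij (RRS.sub_mem Φ hαi.1.1 hαj.1.1 hij h4)
  have hββ : 0 < ⟪β, β⟫ := RRS.inner_self_pos' (Φ.nonzero β hβ)
  simp only [inner_sub_left, inner_sub_right] at h1 h2 hij'
  have c1 : ⟪αj, αi⟫ = ⟪αi, αj⟫ := real_inner_comm _ _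
  have c2 : ⟪αi, β⟫ = ⟪β, αi⟫ := real_inner_comm _ _
  have c3 : ⟪αj, β⟫ = ⟪β, αj⟫ := real_inner_comm _ _
  -- RCLike.re coercions: inner here is real so these are plain reals
  linarith
end

section
/- Let Φ be a reduced root system with positive roots Φ⁺, M a ℤ-module, and ω a 2-cocycle on Φ with values in M. If ω(α|β) = 0 for all pairs of positive roots α,β ∈ Φ⁺ with α+β ∈ Φ₀, and ω(α|−α) = 0 for all α ∈ Φ, then ω = 0, i.e., ω(α|β) = 0 for all α,β ∈ Φ with α+β ∈ Φ₀. -/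
open scoped RealInnerProductSpace

variable {V : Type} [NormedAddCommGroup V] [InnerProductSpace ℝ V]

/-- A 2-cocycle on `Φ` with values in a ℤ-module `M` which vanishes on all
pairs of positive roots (whose sum lies in `Φ₀`) and on all pairs of opposite roots vanishes
identically. -/
theorem two_cocycle_vanishing
    {V : Type} [NormedAddCommGroup V] [InnerProductSpace ℝ V] [FiniteDimensional ℝ V]
    (Φ : ReducedRootSystem V) (f : V →ₗ[ℝ] ℝ) (hf : ∀ α ∈ Φ.roots, f α ≠ 0)
    (M : Type) [AddCommGroup M]
    (ω : V → V → M)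
    (hz : ∀ v : V, ω 0 v = 0) (hz' : ∀ v : V, ω v 0 = 0)
    (hcoc : ∀ α ∈ rootsZero Φ, ∀ β ∈ rootsZero Φ, ∀ γ ∈ rootsZero Φ,
      α + β ∈ rootsZero Φ → β + γ ∈ rootsZero Φ → α + β + γ ∈ rootsZero Φ →
      ω β γ - ω (α + β) γ + ω α (β + γ) - ω α β = 0)
    (hpos : ∀ α ∈ posRoots Φ f, ∀ β ∈ posRoots Φ f, α + β ∈ rootsZero Φ → ω α β = 0)
    (hopp : ∀ α ∈ Φ.roots, ω α (-α) = 0) :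
    ∀ α ∈ Φ.roots, ∀ β ∈ Φ.roots, α + β ∈ rootsZero Φ → ω α β = 0 := by
  have hneg : ∀ α ∈ Φ.roots, -α ∈ Φ.roots := by
    intro α hα
    have h0 : α ≠ 0 := Φ.nonzero α hα
    have hii : ⟪α, α⟫ ≠ 0 := inner_self_ne_zero.mpr h0
    have h := Φ.reflect_mem α hα α hα
    have hc : 2 * ⟪α, α⟫ / ⟪α, α⟫ = 2 := by field_simp
    rw [hc] at h
    have he : α - (2:ℝ) • α = -α := by rw [two_smul]; abel
    rwa [he] at h
  have m0 : (0:V) ∈ rootsZero Φ := Set.mem_insert _ _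
  have mr : ∀ x ∈ Φ.roots, x ∈ rootsZero Φ := fun x hx => Set.mem_insert_of_mem _ hx
  have hopp' : ∀ α ∈ Φ.roots, ω (-α) α = 0 := by
    intro α hα
    simpa using hopp (-α) (hneg α hα)
  have key1 : ∀ α ∈ Φ.roots, ∀ β ∈ Φ.roots, α + β ∈ Φ.roots → ω α β = ω β (-(α + β)) := by
    intro α hα β hβ hs
    have h := hcoc α (mr _ hα) β (mr _ hβ) (-(α + β)) (mr _ (hneg _ hs)) (mr _ hs)
      (by rw [show β + -(α + β) = -α from by abel]; exact mr _ (hneg _ hα))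
      (by rw [show α + β + -(α + β) = (0:V) from by abel]; exact m0)
    rw [show β + -(α + β) = -α from by abel, hopp (α + β) hs, hopp α hα] at h
    have h' : ω β (-(α + β)) - ω α β = 0 := by simpa using h
    exact (sub_eq_zero.mp h').symm
  have key2 : ∀ α ∈ Φ.roots, ∀ β ∈ Φ.roots, α + β ∈ Φ.roots → ω α β = ω (-(α + β)) α := by
    intro α hα β hβ hs
    have h := hcoc (-(α + β)) (mr _ (hneg _ hs)) α (mr _ hα) β (mr _ hβ)
      (by rw [show -(α + β) + α = -β from by abel]; exact mr _ (hneg _ hβ))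
      (mr _ hs)
      (by rw [show -(α + β) + α + β = (0:V) from by abel]; exact m0)
    rw [show -(α + β) + α = -β from by abel, hopp' β hβ, hopp' (α + β) hs] at h
    have h' : ω α β - ω (-(α + β)) α = 0 := by simpa using h
    exact sub_eq_zero.mp h'
  have nnn : ∀ α ∈ Φ.roots, ∀ β ∈ Φ.roots, α + β ∈ Φ.roots →
      f α < 0 → f β < 0 → ω α β = 0 := by
    intro α hα β hβ hs hfa hfb
    have h := hcoc (-α) (mr _ (hneg _ hα)) α (mr _ hα) β (mr _ hβ)
      (by rw [show -α + α = (0:V) from by abel]; exact m0)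
      (mr _ hs)
      (by rw [show -α + α + β = β from by abel]; exact mr _ hβ)
    rw [show -α + α = (0:V) from by abel, hz β, hopp' α hα] at h
    have h' : ω α β + ω (-α) (α + β) = 0 := by
      have h2 : ω α β - 0 + ω (-α) (α + β) - 0 = 0 := h
      simpa using h2
    have h3 := key2 (-α) (hneg _ hα) (α + β) hs
      (by rw [show -α + (α + β) = β from by abel]; exact hβ)
    rw [show -(-α + (α + β)) = -β from by abel] at h3
    have h4 : ω (-β) (-α) = 0 := by
      apply hpos (-β) ⟨hneg _ hβ, by simp only [map_neg]; linarith⟩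
        (-α) ⟨hneg _ hα, by simp only [map_neg]; linarith⟩
      rw [show -β + -α = -(α + β) from by abel]
      exact mr _ (hneg _ hs)
    rw [h3, h4] at h'
    simpa using h'
  intro α hα β hβ hsum
  rcases Set.mem_insert_iff.mp hsum with h0 | hs
  · have hab : α = -β := (neg_eq_of_add_eq_zero_left h0).symm
    rw [hab]
    exact hopp' β hβ
  · have hfa0 := hf α hα
    have hfb0 := hf β hβ
    have hfs0 := hf _ hs
    have hfadd : f (α + β) = f α + f β := map_add f α β
    rcases hfa0.lt_or_gt with hfa | hfa <;> rcases hfb0.lt_or_gt with hfb | hfb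
    · exact nnn α hα β hβ hs hfa hfb
    · -- α negative, β positive
      rcases hfs0.lt_or_gt with hfsn | hfsp
      · -- sum negative: ω α β = ω β (-(α+β)); β pos, -(α+β) pos
        rw [key1 α hα β hβ hs]
        apply hpos β ⟨hβ, hfb⟩ (-(α + β)) ⟨hneg _ hs, by simp only [map_neg]; linarith⟩
        rw [show β + -(α + β) = -α from by abel]
        exact mr _ (hneg _ hα)
      · -- sum positive: ω α β = ω (-(α+β)) α; both negative
        rw [key2 α hα β hβ hs]
        apply nnn (-(α + β)) (hneg _ hs) α hα
        · rw [show -(α + β) + α = -β from by abel]; exact hneg _ hβ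
        · simp only [map_neg]; linarith
        · exact hfa
    · -- α positive, β negative
      rcases hfs0.lt_or_gt with hfsn | hfsp
      · -- sum negative: ω α β = ω (-(α+β)) α; both positive
        rw [key2 α hα β hβ hs]
        apply hpos (-(α + β)) ⟨hneg _ hs, by simp only [map_neg]; linarith⟩ α ⟨hα, hfa⟩
        rw [show -(α + β) + α = -β from by abel]
        exact mr _ (hneg _ hβ)
      · -- sum positive: ω α β = ω β (-(α+β)); both negative
        rw [key1 α hα β hβ hs]
        apply nnn β hβ (-(α + β)) (hneg _ hs)
        · rw [show β + -(α + β) = -α from by abel]; exact hneg _ hα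
        · exact hfb
        · simp only [map_neg]; linarith
    · exact hpos α ⟨hα, hfa⟩ β ⟨hβ, hfb⟩ hsum
end

section
/- Let Φ be a reduced root system and M a ℤ-module. Every symmetric 2-cocycle on Φ with values in M is exact: for every symmetric 2-cocycle ω there exists a 1-cochain ω¹: Φ₀ → M with ω¹(0) = 0 such that ω(α|β) = ω¹(α) + ω¹(β) − ω¹(α+β) for all α,β ∈ Φ₀ with α+β ∈ Φ₀. In other words, the second symmetric cohomology group H²₊(Φ,M) is trivial. -/
open scoped RealInnerProductSpace

variable {V : Type} [NormedAddCommGroup V] [InnerProductSpace ℝ V]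

namespace RRSAux

lemma inner_self_pos' {x : V} (h : x ≠ 0) : 0 < ⟪x, x⟫ :=
  lt_of_le_of_ne real_inner_self_nonneg (Ne.symm (inner_self_ne_zero.2 h))

lemma neg_mem (Φ : ReducedRootSystem V) {α : V} (hα : α ∈ Φ.roots) : -α ∈ Φ.roots := by
  have h := Φ.reflect_mem α hα α hα
  have h0 : ⟪α, α⟫ ≠ 0 := ne_of_gt (inner_self_pos' (Φ.nonzero α hα))
  have h2 : 2 * ⟪α, α⟫ / ⟪α, α⟫ = (2 : ℝ) := by field_simp
  rw [h2] at h
  have h3 : α - (2 : ℝ) • α = -α := by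
    rw [two_smul]; abel
  rwa [h3] at h

lemma sub_mem (Φ : ReducedRootSystem V) {α β : V} (hα : α ∈ Φ.roots) (hβ : β ∈ Φ.roots)
    (hpos : 0 < ⟪α, β⟫) (hne : α ≠ β) : α - β ∈ Φ.roots := by
  have hα0 := Φ.nonzero α hα
  have hβ0 := Φ.nonzero β hβ
  have haa : 0 < ⟪α, α⟫ := inner_self_pos' hα0
  have hbb : 0 < ⟪β, β⟫ := inner_self_pos' hβ0
  obtain ⟨m, hm⟩ := Φ.integral α hα β hβ
  obtain ⟨n, hn⟩ := Φ.integral β hβ α hα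
  have hba : ⟪β, α⟫ = ⟪α, β⟫ := real_inner_comm α β
  have hmpos : (0 : ℝ) < m := by
    rw [← hm, hba]; positivity
  have hnpos : (0 : ℝ) < n := by
    rw [← hn]; positivity
  -- strict Cauchy-Schwarz
  have hndep : ‖β‖ • α ≠ ‖α‖ • β := by
    intro hEq
    have hβeq : (‖β‖ / ‖α‖) • α = β := by
      rw [div_eq_inv_mul, ← smul_smul, hEq, smul_smul,
        inv_mul_cancel₀ (norm_ne_zero_iff.2 hα0), one_smul]
    rcases Φ.reduced α hα _ (hβeq ▸ hβ) with h1 | h1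
    · exact hne (by rw [← hβeq, h1, one_smul])
    · have : (0 : ℝ) < ‖β‖ / ‖α‖ := by positivity
      rw [h1] at this; linarith
  have hCS : ⟪α, β⟫ < ‖α‖ * ‖β‖ := inner_lt_norm_mul_iff_real.2 hndep
  have hab2 : ⟪α, β⟫ * ⟪α, β⟫ < ⟪α, α⟫ * ⟪β, β⟫ := by
    rw [real_inner_self_eq_norm_mul_norm, real_inner_self_eq_norm_mul_norm]
    calc ⟪α, β⟫ * ⟪α, β⟫ < (‖α‖ * ‖β‖) * (‖α‖ * ‖β‖) :=
          mul_self_lt_mul_self (le_of_lt hpos) hCS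
      _ = ‖α‖ * ‖α‖ * (‖β‖ * ‖β‖) := by ring
  have hprod : (m : ℝ) * n < 4 := by
    rw [← hm, ← hn, hba]
    rw [div_mul_div_comm]
    rw [div_lt_iff₀ (by positivity)]
    nlinarith [hab2]
  have hm1 : 1 ≤ m := by
    have : (0:ℤ) < m := by exact_mod_cast hmpos
    omega
  have hn1 : 1 ≤ n := by
    have : (0:ℤ) < n := by exact_mod_cast hnpos
    omega
  have hmn4 : m * n < 4 := by exact_mod_cast hprod
  have hone : m = 1 ∨ n = 1 := by
    by_contra hcon
    push_neg at hcon
    have hm2 : 2 ≤ m := by omega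
    have hn2 : 2 ≤ n := by omega
    nlinarith
  rcases hone with h1 | h1
  · -- 2⟪β,α⟫/⟪α,α⟫ = 1, so β - α ∈ roots
    have := Φ.reflect_mem α hα β hβ
    rw [hm, h1] at this
    simp only [Int.cast_one, one_smul] at this
    have h2 := neg_mem Φ this
    rwa [neg_sub] at h2
  · have := Φ.reflect_mem β hβ α hα
    rw [hn, h1] at this
    simpa using this

lemma key4 (Φ : ReducedRootSystem V) {a b c d : V} (ha : a ∈ Φ.roots) (hb : b ∈ Φ.roots)
    (hc : c ∈ Φ.roots) (hd : d ∈ Φ.roots) (heq : a + b = c + d) (hne : a + b ≠ 0) :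
    a - c ∈ rootsZero Φ ∨ a - d ∈ rootsZero Φ := by
  have hpos : 0 < ⟪a + b, c + d⟫ := by
    rw [← heq]; exact inner_self_pos' hne
  have hexp : ⟪a + b, c + d⟫ = ⟪a, c⟫ + ⟪a, d⟫ + ⟪b, c⟫ + ⟪b, d⟫ := by
    rw [inner_add_left, inner_add_right, inner_add_right]; ring
  have h4 : 0 < ⟪a, c⟫ ∨ 0 < ⟪a, d⟫ ∨ 0 < ⟪b, c⟫ ∨ 0 < ⟪b, d⟫ := by
    by_contra h
    push_neg at h
    obtain ⟨h1, h2, h3, h4⟩ := h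
    rw [hexp] at hpos; linarith
  rcases h4 with h | h | h | h
  · rcases eq_or_ne a c with rfl | hne'
    · exact Or.inl (by simp [rootsZero])
    · exact Or.inl (Set.mem_insert_of_mem _ (sub_mem Φ ha hc h hne'))
  · rcases eq_or_ne a d with rfl | hne'
    · exact Or.inr (by simp [rootsZero])
    · exact Or.inr (Set.mem_insert_of_mem _ (sub_mem Φ ha hd h hne'))
  · rcases eq_or_ne b c with rfl | hne'
    · have had : a = d := by
        have := heq
        rwa [add_comm b d, add_left_inj] at this
      exact Or.inr (by simp [rootsZero, had])
    · have hbc := sub_mem Φ hb hc h hne'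
      have : a - d = -(b - c) := by
        have h' : a + b = c + d := heq
        rw [neg_sub]
        linear_combination (norm := abel) h'
      rw [this]
      exact Or.inr (Set.mem_insert_of_mem _ (neg_mem Φ hbc))
  · rcases eq_or_ne b d with rfl | hne'
    · have hac : a = c := by rwa [add_left_inj] at heq
      exact Or.inl (by simp [rootsZero, hac])
    · have hbd := sub_mem Φ hb hd h hne'
      have : a - c = -(b - d) := by
        rw [neg_sub]
        linear_combination (norm := abel) heq
      rw [this]
      exact Or.inl (Set.mem_insert_of_mem _ (neg_mem Φ hbd))

lemma exists_generic (S : Finset V) :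
    (∀ x ∈ S, x ≠ 0) → ∃ v : V, ∀ x ∈ S, ⟪v, x⟫ ≠ 0 := by
  classical
  induction S using Finset.induction_on with
  | empty => exact fun _ => ⟨0, by simp⟩
  | @insert a S haS IH =>
    intro h0
    obtain ⟨v, hv⟩ := IH fun x hx => h0 x (Finset.mem_insert_of_mem hx)
    have ha0 : a ≠ 0 := h0 a (Finset.mem_insert_self a S)
    set B : Finset ℝ := insert 0 ((insert a S).image fun x => -⟪v, x⟫ / ⟪a, x⟫) with hB
    obtain ⟨t, ht⟩ := Infinite.exists_notMem_finset B
    have ht0 : t ≠ 0 := fun h => ht (h ▸ Finset.mem_insert_self 0 _)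
    refine ⟨v + t • a, ?_⟩
    intro x hx
    have hval : ⟪v + t • a, x⟫ = ⟪v, x⟫ + t * ⟪a, x⟫ := by
      rw [inner_add_left, real_inner_smul_left]
    rcases eq_or_ne ⟪a, x⟫ 0 with hax | hax
    · have hxa : x ≠ a := by
        rintro rfl
        exact inner_self_ne_zero.2 ha0 hax
      have hxS : x ∈ S := by
        rcases Finset.mem_insert.1 hx with h | h
        · exact absurd h hxa
        · exact h
      rw [hval, hax, mul_zero, add_zero]
      exact hv x hxS
    · intro hzero
      rw [hval] at hzero
      have : t = -⟪v, x⟫ / ⟪a, x⟫ := by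
        field_simp
        linarith
      exact ht (this ▸ Finset.mem_insert_of_mem (Finset.mem_image_of_mem _ hx))

end RRSAux

/-- Every symmetric 2-cocycle on a reduced root system `Φ` with values in
a ℤ-module `M` is exact: there is a 1-cochain `ω1` (vanishing at `0`) with
`ω(α|β) = ω1(α) + ω1(β) - ω1(α+β)` on all pairs.  In other words `H²₊(Φ,M)` is trivial. -/
theorem symmetric_two_cocycle_exact
    {V : Type} [NormedAddCommGroup V] [InnerProductSpace ℝ V] [FiniteDimensional ℝ V]
    (Φ : ReducedRootSystem V) (M : Type) [AddCommGroup M]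
    (ω : V → V → M)
    (hz : ∀ v : V, ω 0 v = 0) (hz' : ∀ v : V, ω v 0 = 0)
    (hsym : ∀ α ∈ rootsZero Φ, ∀ β ∈ rootsZero Φ, α + β ∈ rootsZero Φ → ω β α = ω α β)
    (hcoc : ∀ α ∈ rootsZero Φ, ∀ β ∈ rootsZero Φ, ∀ γ ∈ rootsZero Φ,
      α + β ∈ rootsZero Φ → β + γ ∈ rootsZero Φ → α + β + γ ∈ rootsZero Φ →
      ω β γ - ω (α + β) γ + ω α (β + γ) - ω α β = 0) :
    ∃ ω1 : V → M, ω1 0 = 0 ∧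
      ∀ α ∈ rootsZero Φ, ∀ β ∈ rootsZero Φ, α + β ∈ rootsZero Φ →
        ω α β = ω1 α + ω1 β - ω1 (α + β) := by
  classical
  have hR0 : ∀ {x : V}, x ∈ Φ.roots → x ∈ rootsZero Φ := fun h => Set.mem_insert_of_mem _ h
  have h0R : (0 : V) ∈ rootsZero Φ := Set.mem_insert _ _
  obtain ⟨v, hv⟩ := RRSAux.exists_generic Φ.finite.toFinset
    (fun x hx => Φ.nonzero x (Φ.finite.mem_toFinset.1 hx))
  obtain ⟨f, hfdef⟩ : ∃ f : V → ℝ, ∀ x, f x = ⟪v, x⟫ := ⟨_, fun _ => rfl⟩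
  have hv' : ∀ x ∈ Φ.roots, f x ≠ 0 := fun x hx => by
    rw [hfdef]; exact hv x (Φ.finite.mem_toFinset.2 hx)
  have hfadd : ∀ x y : V, f (x + y) = f x + f y := fun x y => by
    rw [hfdef, hfdef, hfdef, inner_add_right]
  have hfneg : ∀ x : V, f (-x) = -f x := fun x => by
    rw [hfdef, hfdef, inner_neg_right]
  have hf0 : f 0 = 0 := by rw [hfdef]; exact inner_zero_right v
  obtain ⟨P, hPdef⟩ : ∃ P : Set V, ∀ x, x ∈ P ↔ (x ∈ Φ.roots ∧ 0 < f x) :=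
    ⟨_, fun _ => Iff.rfl⟩
  have hProot : ∀ x ∈ P, x ∈ Φ.roots := fun x hx => ((hPdef x).1 hx).1
  have hPpos : ∀ x ∈ P, 0 < f x := fun x hx => ((hPdef x).1 hx).2
  have hPmk : ∀ x, x ∈ Φ.roots → 0 < f x → x ∈ P := fun x h1 h2 => (hPdef x).2 ⟨h1, h2⟩
  have hPmem : ∀ x ∈ Φ.roots, x ∈ P ∨ -x ∈ P := by
    intro x hx
    rcases lt_or_gt_of_ne (hv' x hx) with h | h
    · right
      exact hPmk _ (RRSAux.neg_mem Φ hx) (by rw [hfneg]; linarith)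
    · left; exact hPmk _ hx h
  have hPneg : ∀ x ∈ P, -x ∉ P := by
    intro x hx hnx
    have h1 := hPpos _ hnx
    rw [hfneg] at h1
    linarith [hPpos x hx]
  have hPsum : ∀ a ∈ P, ∀ b ∈ P, a + b ∈ rootsZero Φ → a + b ∈ P := by
    intro a ha b hb hab
    have hpos : 0 < f (a + b) := by rw [hfadd]; linarith [hPpos a ha, hPpos b hb]
    rcases Set.mem_insert_iff.1 hab with h | h
    · rw [h, hf0] at hpos; exact absurd hpos (lt_irrefl 0)
    · exact hPmk _ h hpos
  obtain ⟨Q, hQdef⟩ : ∃ Q : Finset V, ∀ x, x ∈ Q ↔ x ∈ P :=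
    ⟨Φ.finite.toFinset.filter (fun x => 0 < f x), by
      intro x
      simp only [Finset.mem_filter, Set.Finite.mem_toFinset, hPdef]⟩
  obtain ⟨mf, hmf⟩ : ∃ mf : V → ℕ, ∀ x, mf x = (Q.filter (fun y => f y < f x)).card :=
    ⟨_, fun _ => rfl⟩
  have hmlt : ∀ a ∈ P, ∀ b ∈ P, a + b ∈ P → mf a < mf (a + b) := by
    intro a ha b hb hab
    rw [hmf, hmf]
    apply Finset.card_lt_card
    have hsub : Q.filter (fun y => f y < f a) ⊆ Q.filter (fun y => f y < f (a + b)) := by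
      intro y hy
      rw [Finset.mem_filter] at *
      refine ⟨hy.1, lt_of_lt_of_le hy.2 ?_⟩
      rw [hfadd]
      linarith [hPpos b hb]
    rw [Finset.ssubset_iff_of_subset hsub]
    refine ⟨a, Finset.mem_filter.2 ⟨(hQdef a).2 ha, ?_⟩, fun hmem => ?_⟩
    · rw [hfadd]; linarith [hPpos b hb]
    · exact lt_irrefl _ (Finset.mem_filter.1 hmem).2
  have main : ∀ n : ℕ, ∃ g : V → M, ∀ a ∈ P, ∀ b ∈ P, a + b ∈ P → mf (a + b) < n →
      ω a b = g a + g b - g (a + b) := by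
    intro n
    induction n with
    | zero => exact ⟨fun _ => 0, fun a _ b _ _ h => absurd h (Nat.not_lt_zero _)⟩
    | succ n IH =>
      obtain ⟨g, hg⟩ := IH
      have exch0 : ∀ a ∈ P, ∀ b ∈ P, ∀ c ∈ P, ∀ d ∈ P, a + b = c + d → a + b ∈ P →
          mf (a + b) ≤ n → a - c ∈ P →
          ω a b - g a - g b = ω c d - g c - g d := by
        intro a ha b hb c hc d hd heq hab hlev hδ
        have hca : c + (a - c) = a := by abel
        have hbd : (a - c) + b = d := by linear_combination (norm := abel) heq
        have hmfa : mf a < mf (a + b) := hmlt a ha b hb hab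
        have hdc : d + c = a + b := by rw [add_comm]; exact heq.symm
        have hmfd : mf d < mf (a + b) := by
          have h1 := hmlt d hd c hc (by rw [hdc]; exact hab)
          rwa [hdc] at h1
        have haP2 : c + (a - c) ∈ P := by rw [hca]; exact ha
        have e1 : ω c (a - c) = g c + g (a - c) - g a := by
          have h1 := hg c hc (a - c) hδ haP2 (by rw [hca]; omega)
          rwa [hca] at h1
        have hdP2 : (a - c) + b ∈ P := by rw [hbd]; exact hd
        have e2 : ω (a - c) b = g (a - c) + g b - g d := by
          have h1 := hg (a - c) hδ b hb hdP2 (by rw [hbd]; omega)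
          rwa [hbd] at h1
        have hco := hcoc c (hR0 (hProot c hc)) (a - c) (hR0 (hProot _ hδ)) b
          (hR0 (hProot b hb))
          (by rw [hca]; exact hR0 (hProot a ha))
          (by rw [hbd]; exact hR0 (hProot d hd))
          (by rw [show c + (a - c) + b = a + b by abel]; exact hR0 (hProot _ hab))
        rw [hca, hbd] at hco
        have hY : ω a b = ω (a - c) b + ω c d - ω c (a - c) := by
          have h' : ω a b - (ω (a - c) b + ω c d - ω c (a - c))
              = -(ω (a - c) b - ω a b + ω c d - ω c (a - c)) := by abel
          rw [hco, neg_zero] at h'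
          exact sub_eq_zero.1 h'
        rw [hY, e1, e2]
        abel
      have exch : ∀ a ∈ P, ∀ b ∈ P, ∀ c ∈ P, ∀ d ∈ P, a + b = c + d → a + b ∈ P →
          mf (a + b) ≤ n → ω a b - g a - g b = ω c d - g c - g d := by
        intro a ha b hb c hc d hd heq hab hlev
        have habne : a + b ≠ 0 := Φ.nonzero _ (hProot _ hab)
        have handle : ∀ c' ∈ P, ∀ d' ∈ P, a + b = c' + d' → a - c' ∈ rootsZero Φ →
            ω a b - g a - g b = ω c' d' - g c' - g d' := by
          intro c' hc' d' hd' heq' hmem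
          rcases Set.mem_insert_iff.1 hmem with h0 | hroot
          · have hac : a = c' := sub_eq_zero.1 h0
            have hbd : b = d' := by rw [hac] at heq'; exact add_left_cancel heq'
            rw [hac, hbd]
          · rcases lt_trichotomy (f (a - c')) 0 with hneg | hzero | hposf
            · have hroot' : c' - a ∈ Φ.roots := by
                have h1 := RRSAux.neg_mem Φ hroot
                rwa [neg_sub] at h1
              have hP' : c' - a ∈ P := hPmk _ hroot' (by
                have h2 : f (c' - a) = -f (a - c') := by
                  rw [show c' - a = -(a - c') by abel, hfneg]
                rw [h2]; linarith)
              exact (exch0 c' hc' d' hd' a ha b hb heq'.symm (by rw [← heq']; exact hab)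
                (by rw [← heq']; exact hlev) hP').symm
            · exact absurd hzero (hv' _ hroot)
            · exact exch0 a ha b hb c' hc' d' hd' heq' hab hlev (hPmk _ hroot hposf)
        rcases RRSAux.key4 Φ (hProot a ha) (hProot b hb) (hProot c hc) (hProot d hd) heq habne
          with h | h
        · exact handle c hc d hd heq h
        · have hres := handle d hd c hc (by rw [heq, add_comm]) h
          have hdc : ω d c = ω c d := hsym c (hR0 (hProot c hc)) d (hR0 (hProot d hd))
            (by rw [← heq]; exact hR0 (hProot _ hab))
          rw [hdc] at hres
          rw [hres]; abel
      obtain ⟨g', hg'⟩ : ∃ g' : V → M, ∀ x : V, g' x =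
          if h : x ∈ P ∧ mf x = n ∧ ∃ p : V × V, p.1 ∈ P ∧ p.2 ∈ P ∧ p.1 + p.2 = x
          then g h.2.2.choose.1 + g h.2.2.choose.2 - ω h.2.2.choose.1 h.2.2.choose.2
          else g x := ⟨_, fun _ => rfl⟩
      refine ⟨g', ?_⟩
      intro a ha b hb hab hlt
      have hma : mf a < n := by
        have h1 := hmlt a ha b hb hab
        omega
      have hmb : mf b < n := by
        have h1 := hmlt b hb a ha (by rwa [add_comm])
        rw [add_comm b a] at h1
        omega
      have hga : g' a = g a := by
        rw [hg']
        exact dif_neg (fun hcon => absurd hcon.2.1 (by omega))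
      have hgb : g' b = g b := by
        rw [hg']
        exact dif_neg (fun hcon => absurd hcon.2.1 (by omega))
      rcases Nat.lt_succ_iff_lt_or_eq.1 hlt with hlow | heqn
      · have hgab : g' (a + b) = g (a + b) := by
          rw [hg']
          exact dif_neg (fun hcon => absurd hcon.2.1 (by omega))
        rw [hga, hgb, hgab]
        exact hg a ha b hb hab hlow
      · have hcond : (a + b) ∈ P ∧ mf (a + b) = n ∧
            ∃ p : V × V, p.1 ∈ P ∧ p.2 ∈ P ∧ p.1 + p.2 = a + b :=
          ⟨hab, heqn, ⟨(a, b), ha, hb, rfl⟩⟩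
        have hgab : g' (a + b) = g hcond.2.2.choose.1 + g hcond.2.2.choose.2
            - ω hcond.2.2.choose.1 hcond.2.2.choose.2 := by
          rw [hg']
          exact dif_pos hcond
        obtain ⟨hq1, hq2, hq3⟩ := hcond.2.2.choose_spec
        have hexch := exch a ha b hb hcond.2.2.choose.1 hq1 hcond.2.2.choose.2 hq2
          hq3.symm hab (le_of_eq heqn)
        rw [hga, hgb, hgab]
        have h2 : ω a b - (g a + g b - (g hcond.2.2.choose.1 + g hcond.2.2.choose.2
            - ω hcond.2.2.choose.1 hcond.2.2.choose.2))
            = (ω a b - g a - g b) - (ω hcond.2.2.choose.1 hcond.2.2.choose.2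
            - g hcond.2.2.choose.1 - g hcond.2.2.choose.2) := by abel
        rw [hexch, sub_self] at h2
        exact sub_eq_zero.1 h2
  obtain ⟨g, hgfin⟩ := main (Q.card + 1)
  have hmbound : ∀ x, mf x ≤ Q.card := fun x => by
    rw [hmf]; exact Finset.card_filter_le _ _
  have hgP : ∀ a ∈ P, ∀ b ∈ P, a + b ∈ rootsZero Φ → ω a b = g a + g b - g (a + b) :=
    fun a ha b hb hab =>
      hgfin a ha b hb (hPsum a ha b hb hab) (Nat.lt_succ_of_le (hmbound _))
  obtain ⟨ω1, hω1def⟩ : ∃ ω1 : V → M, ∀ x, ω1 x =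
      if x ∈ P then g x else if -x ∈ P then ω (-x) x - g (-x) else 0 := ⟨_, fun _ => rfl⟩
  have h0P : (0 : V) ∉ P := fun h => Φ.nonzero 0 (hProot _ h) rfl
  have hω10 : ω1 0 = 0 := by
    rw [hω1def, if_neg h0P, neg_zero, if_neg h0P]
  have hω1pos : ∀ a ∈ P, ω1 a = g a := fun a ha => by rw [hω1def, if_pos ha]
  have hω1neg : ∀ a ∈ P, ω1 (-a) = ω a (-a) - g a := by
    intro a ha
    rw [hω1def, if_neg (hPneg a ha), neg_neg, if_pos ha]
  have keyI : ∀ a ∈ P, ∀ b ∈ P, a + b ∈ rootsZero Φ →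
      ω a b = ω1 a + ω1 b - ω1 (a + b) := by
    intro a ha b hb hab
    rw [hω1pos a ha, hω1pos b hb, hω1pos _ (hPsum a ha b hb hab)]
    exact hgP a ha b hb hab
  have keyII : ∀ a ∈ P, ω a (-a) = ω1 a + ω1 (-a) := by
    intro a ha
    rw [hω1pos a ha, hω1neg a ha]
    abel
  have keyB2 : ∀ a ∈ P, ∀ b ∈ P, a - b ∈ P → ω a (-b) = ω1 a + ω1 (-b) - ω1 (a - b) := by
    intro a ha b hb hγ
    have hγb : (a - b) + b = a := by abel
    have hbb0 : b + -b = (0 : V) := by abel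
    have hco := hcoc (a - b) (hR0 (hProot _ hγ)) b (hR0 (hProot b hb)) (-b)
      (hR0 (RRSAux.neg_mem Φ (hProot b hb)))
      (by rw [hγb]; exact hR0 (hProot a ha))
      (by rw [hbb0]; exact h0R)
      (by rw [show (a - b) + b + -b = a - b by abel]; exact hR0 (hProot _ hγ))
    rw [hγb, hbb0, hz'] at hco
    have e1 : ω b (-b) = ω1 b + ω1 (-b) := keyII b hb
    have e2 : ω (a - b) b = ω1 (a - b) + ω1 b - ω1 a := by
      have h1 := keyI (a - b) hγ b hb (by rw [hγb]; exact hR0 (hProot a ha))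
      rwa [hγb] at h1
    have hY : ω a (-b) = ω b (-b) - ω (a - b) b := by
      have h' : ω a (-b) - (ω b (-b) - ω (a - b) b)
          = -(ω b (-b) - ω a (-b) + 0 - ω (a - b) b) := by abel
      rw [hco, neg_zero] at h'
      exact sub_eq_zero.1 h'
    rw [hY, e1, e2]
    abel
  have keyB3 : ∀ a ∈ P, ∀ b ∈ P, b - a ∈ P → ω a (-b) = ω1 a + ω1 (-b) - ω1 (a - b) := by
    intro a ha b hb hc
    have hcroot := hProot _ hc
    have hncroot : -(b - a) ∈ Φ.roots := RRSAux.neg_mem Φ hcroot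
    have hcc : -(b - a) + (b - a) = (0 : V) := by abel
    have hca : (b - a) + a = b := by abel
    have hco1 := hcoc (-(b - a)) (hR0 hncroot) (b - a) (hR0 hcroot) a (hR0 (hProot a ha))
      (by rw [hcc]; exact h0R)
      (by rw [hca]; exact hR0 (hProot b hb))
      (by rw [show -(b - a) + (b - a) + a = a by abel]; exact hR0 (hProot a ha))
    rw [hcc, hz, hca] at hco1
    have hab' : a + -b = -(b - a) := by abel
    have hco2 := hcoc a (hR0 (hProot a ha)) (-b) (hR0 (RRSAux.neg_mem Φ (hProot b hb))) b
      (hR0 (hProot b hb))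
      (by rw [hab']; exact hR0 hncroot)
      (by rw [show -b + b = (0 : V) by abel]; exact h0R)
      (by rw [show a + -b + b = a by abel]; exact hR0 (hProot a ha))
    rw [hab', show -b + b = (0 : V) by abel, hz'] at hco2
    have e1 : ω (-b) b = ω1 b + ω1 (-b) := by
      rw [hsym b (hR0 (hProot b hb)) (-b) (hR0 (RRSAux.neg_mem Φ (hProot b hb)))
        (by rw [show b + -b = (0 : V) by abel]; exact h0R)]
      exact keyII b hb
    have e2 : ω (-(b - a)) (b - a) = ω1 (b - a) + ω1 (-(b - a)) := by
      rw [hsym (b - a) (hR0 hcroot) (-(b - a)) (hR0 hncroot)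
        (by rw [show (b - a) + -(b - a) = (0 : V) by abel]; exact h0R)]
      exact keyII (b - a) hc
    have e3 : ω (b - a) a = ω1 (b - a) + ω1 a - ω1 b := by
      have h1 := keyI (b - a) hc a ha (by rw [hca]; exact hR0 (hProot b hb))
      rwa [hca] at h1
    have hX : ω (-(b - a)) b = ω (-(b - a)) (b - a) - ω (b - a) a := by
      have h' : ω (-(b - a)) b - (ω (-(b - a)) (b - a) - ω (b - a) a)
          = ω (b - a) a - 0 + ω (-(b - a)) b - ω (-(b - a)) (b - a) := by abel
      rw [hco1] at h'
      exact sub_eq_zero.1 h'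
    have hY : ω a (-b) = ω (-b) b - ω (-(b - a)) b := by
      have h' : ω a (-b) - (ω (-b) b - ω (-(b - a)) b)
          = -(ω (-b) b - ω (-(b - a)) b + 0 - ω a (-b)) := by abel
      rw [hco2, neg_zero] at h'
      exact sub_eq_zero.1 h'
    have hfin : ω a (-b) = ω1 a + ω1 (-b) - ω1 (-(b - a)) := by
      rw [hY, hX, e1, e2, e3]
      abel
    rw [hfin, show -(b - a) = a - b by abel]
  have keyMix : ∀ a ∈ P, ∀ b ∈ P, a + -b ∈ rootsZero Φ →
      ω a (-b) = ω1 a + ω1 (-b) - ω1 (a + -b) := by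
    intro a ha b hb hmem
    rcases Set.mem_insert_iff.1 hmem with h0 | hroot
    · have hab : a = b := by
        have h1 : a - b = 0 := by rw [sub_eq_add_neg]; exact h0
        exact sub_eq_zero.1 h1
      subst hab
      rw [h0, hω10, sub_zero]
      exact keyII a ha
    · have hfne := hv' _ hroot
      rcases lt_trichotomy (f (a + -b)) 0 with hneg | h0 | hpos
      · have hP' : b - a ∈ P := hPmk _ (by
            have h1 := RRSAux.neg_mem Φ hroot
            rwa [show -(a + -b) = b - a by abel] at h1)
          (by
            have h1 : f (b - a) = -f (a + -b) := by
              rw [show b - a = -(a + -b) by abel, hfneg]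
            rw [h1]; linarith)
        have h2 := keyB3 a ha b hb hP'
        rwa [show a - b = a + -b by abel] at h2
      · exact absurd h0 hfne
      · have hP' : a - b ∈ P := hPmk _ (by rwa [show a - b = a + -b by abel])
          (by rw [show a - b = a + -b by abel]; exact hpos)
        have h2 := keyB2 a ha b hb hP'
        rwa [show a - b = a + -b by abel] at h2
  have keyNeg : ∀ a ∈ P, ∀ b ∈ P, -a + -b ∈ rootsZero Φ →
      ω (-a) (-b) = ω1 (-a) + ω1 (-b) - ω1 (-a + -b) := by
    intro a ha b hb hmem
    have hfneg' : f (-a + -b) < 0 := by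
      rw [hfadd, hfneg, hfneg]
      linarith [hPpos a ha, hPpos b hb]
    have hroot : -a + -b ∈ Φ.roots := by
      rcases Set.mem_insert_iff.1 hmem with h0 | h
      · rw [h0, hf0] at hfneg'
        exact absurd hfneg' (lt_irrefl 0)
      · exact h
    have hsroot : a + b ∈ Φ.roots := by
      have h1 := RRSAux.neg_mem Φ hroot
      rwa [show -(-a + -b) = a + b by abel] at h1
    have hsP : a + b ∈ P := hPmk _ hsroot
      (by rw [hfadd]; linarith [hPpos a ha, hPpos b hb])
    have hnb : -b + b = (0 : V) := by abel
    have hco1 := hcoc (-a) (hR0 (RRSAux.neg_mem Φ (hProot a ha))) (-b)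
      (hR0 (RRSAux.neg_mem Φ (hProot b hb))) b (hR0 (hProot b hb))
      hmem (by rw [hnb]; exact h0R)
      (by rw [show -a + -b + b = -a by abel]; exact hR0 (RRSAux.neg_mem Φ (hProot a ha)))
    rw [hnb, hz'] at hco1
    have hsb : (a + b) + -a = b := by abel
    have hss : -(a + b) + (a + b) = (0 : V) := by abel
    have hco2 := hcoc (-(a + b)) (hR0 (RRSAux.neg_mem Φ hsroot)) (a + b) (hR0 hsroot) (-a)
      (hR0 (RRSAux.neg_mem Φ (hProot a ha)))
      (by rw [hss]; exact h0R)
      (by rw [hsb]; exact hR0 (hProot b hb))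
      (by rw [show -(a + b) + (a + b) + -a = -a by abel]
          exact hR0 (RRSAux.neg_mem Φ (hProot a ha)))
    rw [hss, hz, hsb] at hco2
    have e1 : ω (-b) b = ω1 b + ω1 (-b) := by
      rw [hsym b (hR0 (hProot b hb)) (-b) (hR0 (RRSAux.neg_mem Φ (hProot b hb)))
        (by rw [show b + -b = (0 : V) by abel]; exact h0R)]
      exact keyII b hb
    have e2 : ω (-(a + b)) (a + b) = ω1 (a + b) + ω1 (-(a + b)) := by
      rw [hsym (a + b) (hR0 hsroot) (-(a + b)) (hR0 (RRSAux.neg_mem Φ hsroot))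
        (by rw [show (a + b) + -(a + b) = (0 : V) by abel]; exact h0R)]
      exact keyII (a + b) hsP
    have e3 : ω (a + b) (-a) = ω1 (a + b) + ω1 (-a) - ω1 b := by
      have h1 := keyMix (a + b) hsP a ha (by rw [hsb]; exact hR0 (hProot b hb))
      rwa [hsb] at h1
    have hX : ω (-(a + b)) b = ω (-(a + b)) (a + b) - ω (a + b) (-a) := by
      have h' : ω (-(a + b)) b - (ω (-(a + b)) (a + b) - ω (a + b) (-a))
          = ω (a + b) (-a) - 0 + ω (-(a + b)) b - ω (-(a + b)) (a + b) := by abel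
      rw [hco2] at h'
      exact sub_eq_zero.1 h'
    have hY : ω (-a) (-b) = ω (-b) b - ω (-a + -b) b := by
      have h' : ω (-a) (-b) - (ω (-b) b - ω (-a + -b) b)
          = -(ω (-b) b - ω (-a + -b) b + 0 - ω (-a) (-b)) := by abel
      rw [hco1, neg_zero] at h'
      exact sub_eq_zero.1 h'
    have hsum : -a + -b = -(a + b) := by abel
    rw [hY, hsum, hX, e1, e2, e3]
    abel
  refine ⟨ω1, hω10, ?_⟩
  intro α hα β hβ hαβ
  rcases Set.mem_insert_iff.1 hα with rfl | hαR
  · rw [hz, hω10, zero_add β]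
    abel
  rcases Set.mem_insert_iff.1 hβ with rfl | hβR
  · rw [hz', hω10, add_zero α]
    abel
  rcases hPmem α hαR with hαP | hαN
  · rcases hPmem β hβR with hβP | hβN
    · exact keyI α hαP β hβP hαβ
    · have h1 := keyMix α hαP (-β) hβN (by rwa [neg_neg])
      rwa [neg_neg] at h1
  · rcases hPmem β hβR with hβP | hβN
    · have hsymm : ω α β = ω β α := (hsym α hα β hβ hαβ).symm
      have h1 := keyMix β hβP (-α) hαN (by rw [neg_neg]; rwa [add_comm])
      rw [neg_neg] at h1
      rw [hsymm, h1, add_comm β α]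
      abel
    · have h1 := keyNeg (-α) hαN (-β) hβN (by rwa [neg_neg, neg_neg])
      rwa [neg_neg, neg_neg] at h1
end

section
/- Let Φ = {r₀, r₁, r₂, r₃, r₄, r₅} be the root system of type A₂, realized in ℝ² with r₀ = a, r₁ = a+b, r₂ = b, r₃ = −a, r₄ = −a−b, r₅ = −b for vectors a, b ∈ ℝ² of equal length with angle 2π/3 between them (so that, with indices taken mod 6, rᵢ + r_{i+2} = r_{i+1} and rᵢ + r_{i+3} = 0). Define a ℤ-valued 2-cochain ω by ω(rᵢ|r_{i+2}) = 1, ω(rᵢ|r_{i+3}) = 0, and ω(rᵢ|r_{i+4}) = −1 for all i mod 6. Then ω is a 2-cocycle, ω is antisymmetric (ω(β|α) = −ω(α|β) for all pairs), ω ≠ 0, and there is no 1-cochain ω¹: Φ₀ → ℤ with ω(α|β) = ω¹(α) + ω¹(β) − ω¹(α+β) for all pairs. In particular the second antisymmetric cohomology group H²₋(A₂,ℤ) is nontrivial. -/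
open scoped RealInnerProductSpace

/-- The six roots of the `A₂` root system realized in `ℝ²`, built from two vectors
`a, b`:  `r₀ = a`, `r₁ = a+b`, `r₂ = b`, `r₃ = -a`, `r₄ = -a-b`, `r₅ = -b`
(indices taken mod 6). -/
noncomputable def A2root (a b : EuclideanSpace ℝ (Fin 2)) : Fin 6 → EuclideanSpace ℝ (Fin 2) :=
  ![a, a + b, b, -a, -a - b, -b]

/-- `Φ₀ = Φ ∪ {0}` for the `A₂` root system. -/
def A2zero (a b : EuclideanSpace ℝ (Fin 2)) : Set (EuclideanSpace ℝ (Fin 2)) :=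
  insert 0 (Set.range (A2root a b))

noncomputable def sgnR (x : ℝ) : ℤ := if 0 < x then 1 else if x < 0 then -1 else 0

noncomputable def om (a b v w : EuclideanSpace ℝ (Fin 2)) : ℤ :=
  sgnR ((v 0 * w 1 - v 1 * w 0) * (a 0 * b 1 - a 1 * b 0))

/-- coordinates of `Φ₀` in the basis `a, b`. -/
def A2L : List (ℤ × ℤ) := [(0,0),(1,0),(1,1),(0,1),(-1,0),(-1,-1),(0,-1)]

lemma sgnR_neg (x : ℝ) : sgnR (-x) = - sgnR x := by
  unfold sgnR
  rcases lt_trichotomy x 0 with h|h|h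
  · simp [h, h.not_gt, neg_pos.mpr h]
  · simp [h]
  · simp [h, h.not_gt, neg_neg_iff_pos.mpr h, (neg_nonpos_of_nonneg h.le).not_gt]

lemma om_antisymm (a b v w : EuclideanSpace ℝ (Fin 2)) : om a b w v = - om a b v w := by
  unfold om
  rw [show (w 0 * v 1 - w 1 * v 0) * (a 0 * b 1 - a 1 * b 0)
      = -((v 0 * w 1 - v 1 * w 0) * (a 0 * b 1 - a 1 * b 0)) by ring, sgnR_neg]

lemma om_zero_left (a b v : EuclideanSpace ℝ (Fin 2)) : om a b 0 v = 0 := by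
  have h0 : (0 : EuclideanSpace ℝ (Fin 2)) 0 = 0 := rfl
  have h1 : (0 : EuclideanSpace ℝ (Fin 2)) 1 = 0 := rfl
  simp [om, sgnR, h0, h1]

lemma om_zero_right (a b v : EuclideanSpace ℝ (Fin 2)) : om a b v 0 = 0 := by
  rw [om_antisymm, om_zero_left, neg_zero]

lemma ev (a b : EuclideanSpace ℝ (Fin 2)) (hd : a 0 * b 1 - a 1 * b 0 ≠ 0)
    (m1 n1 m2 n2 : ℤ) (x y : EuclideanSpace ℝ (Fin 2))
    (hx : x = ((m1:ℤ):ℝ) • a + ((n1:ℤ):ℝ) • b) (hy : y = ((m2:ℤ):ℝ) • a + ((n2:ℤ):ℝ) • b) :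
    om a b x y = (m1 * n2 - n1 * m2).sign := by
  subst hx hy
  have hd2 : 0 < (a 0 * b 1 - a 1 * b 0)^2 := (sq_nonneg _).lt_of_ne' (pow_ne_zero 2 hd)
  unfold om sgnR
  simp only [PiLp.add_apply, PiLp.smul_apply, smul_eq_mul]
  have key : (((m1:ℝ) * a 0 + (n1:ℝ) * b 0) * ((m2:ℝ) * a 1 + (n2:ℝ) * b 1) -
      ((m1:ℝ) * a 1 + (n1:ℝ) * b 1) * ((m2:ℝ) * a 0 + (n2:ℝ) * b 0)) *
      (a 0 * b 1 - a 1 * b 0) =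
      ((m1 * n2 - n1 * m2 : ℤ) : ℝ) * (a 0 * b 1 - a 1 * b 0)^2 := by push_cast; ring
  simp only [key]
  rcases lt_trichotomy (m1 * n2 - n1 * m2) 0 with h|h|h
  · have hneg : ((m1 * n2 - n1 * m2 : ℤ) : ℝ) * (a 0 * b 1 - a 1 * b 0)^2 < 0 :=
      mul_neg_of_neg_of_pos (by exact_mod_cast h) hd2
    rw [if_neg (by linarith), if_pos hneg, Int.sign_eq_neg_one_of_neg h]
  · rw [h]; simp
  · have hpos : 0 < ((m1 * n2 - n1 * m2 : ℤ) : ℝ) * (a 0 * b 1 - a 1 * b 0)^2 :=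
      mul_pos (by exact_mod_cast h) hd2
    rw [if_pos hpos, Int.sign_eq_one_of_pos h]

lemma mem_A2zero_iff (a b x : EuclideanSpace ℝ (Fin 2)) :
    x ∈ A2zero a b ↔ x = 0 ∨ x = a ∨ x = a + b ∨ x = b ∨ x = -a ∨ x = -a - b ∨ x = -b := by
  unfold A2zero
  simp only [Set.mem_insert_iff, Set.mem_range]
  constructor
  · rintro (rfl | ⟨i, rfl⟩)
    · tauto
    · fin_cases i <;> simp [A2root] <;> tauto
  · rintro (rfl | rfl | rfl | rfl | rfl | rfl | rfl)
    · tauto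
    · exact Or.inr ⟨0, rfl⟩
    · exact Or.inr ⟨1, rfl⟩
    · exact Or.inr ⟨2, rfl⟩
    · exact Or.inr ⟨3, rfl⟩
    · exact Or.inr ⟨4, rfl⟩
    · exact Or.inr ⟨5, rfl⟩

lemma coords_inj (a b : EuclideanSpace ℝ (Fin 2)) (hd : a 0 * b 1 - a 1 * b 0 ≠ 0)
    {m n p q : ℝ} (h : m • a + n • b = p • a + q • b) : m = p ∧ n = q := by
  have h0 : (m • a + n • b) 0 = (p • a + q • b) 0 := by rw [h]
  have h1 : (m • a + n • b) 1 = (p • a + q • b) 1 := by rw [h]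
  simp only [PiLp.add_apply, PiLp.smul_apply, smul_eq_mul] at h0 h1
  have hm : (m - p) * (a 0 * b 1 - a 1 * b 0) = 0 := by linear_combination b 1 * h0 - b 0 * h1
  have hn : (n - q) * (a 0 * b 1 - a 1 * b 0) = 0 := by linear_combination a 0 * h1 - a 1 * h0
  constructor
  · have := (mul_eq_zero.mp hm).resolve_right hd; linarith
  · have := (mul_eq_zero.mp hn).resolve_right hd; linarith

lemma exists_coords (a b x : EuclideanSpace ℝ (Fin 2)) (h : x ∈ A2zero a b) :
    ∃ p ∈ A2L, x = ((p.1:ℤ):ℝ) • a + ((p.2:ℤ):ℝ) • b := by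
  rw [mem_A2zero_iff] at h
  rcases h with h|h|h|h|h|h|h
  · exact ⟨(0, 0), by decide, h.trans (by module)⟩
  · exact ⟨(1, 0), by decide, h.trans (by module)⟩
  · exact ⟨(1, 1), by decide, h.trans (by module)⟩
  · exact ⟨(0, 1), by decide, h.trans (by module)⟩
  · exact ⟨(-1, 0), by decide, h.trans (by module)⟩
  · exact ⟨(-1, -1), by decide, h.trans (by module)⟩
  · exact ⟨(0, -1), by decide, h.trans (by module)⟩

lemma mem_coords (a b : EuclideanSpace ℝ (Fin 2)) (hd : a 0 * b 1 - a 1 * b 0 ≠ 0)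
    (m n : ℤ) (h : ((m:ℤ):ℝ) • a + ((n:ℤ):ℝ) • b ∈ A2zero a b) : (m, n) ∈ A2L := by
  obtain ⟨p, hp, he⟩ := exists_coords a b _ h
  obtain ⟨h1, h2⟩ := coords_inj a b hd he
  have hm : m = p.1 := by exact_mod_cast h1
  have hn : n = p.2 := by exact_mod_cast h2
  rw [hm, hn]; exact hp

lemma coc_int : ∀ p ∈ A2L, ∀ q ∈ A2L, ∀ r ∈ A2L,
    (p.1 + q.1, p.2 + q.2) ∈ A2L → (q.1 + r.1, q.2 + r.2) ∈ A2L →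
    (p.1 + q.1 + r.1, p.2 + q.2 + r.2) ∈ A2L →
    (q.1 * r.2 - q.2 * r.1).sign - ((p.1 + q.1) * r.2 - (p.2 + q.2) * r.1).sign +
      (p.1 * (q.2 + r.2) - p.2 * (q.1 + r.1)).sign - (p.1 * q.2 - p.2 * q.1).sign = 0 := by
  decide

set_option maxHeartbeats 1000000 in
/-- On the root system of type `A₂` (realized in `ℝ²` by two vectors of
equal length with angle `2π/3` between them, so that `rᵢ + r_{i+2} = r_{i+1}` and
`rᵢ + r_{i+3} = 0`), the ℤ-valued 2-cochain determined by `ω(rᵢ|r_{i+2}) = 1`,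
`ω(rᵢ|r_{i+3}) = 0`, `ω(rᵢ|r_{i+4}) = -1` exists, is a nonzero antisymmetric 2-cocycle,
and is not the coboundary of any 1-cochain; hence `H²₋(A₂,ℤ) ≠ 0`. -/
theorem A2_antisymmetric_cohomology_nontrivial
    (a b : EuclideanSpace ℝ (Fin 2)) (ha : a ≠ 0) (hnorm : ‖b‖ = ‖a‖)
    (hangle : ⟪a, b⟫ = -(‖a‖ ^ 2) / 2) :
    (∀ i : Fin 6, A2root a b i + A2root a b (i + 2) = A2root a b (i + 1) ∧
        A2root a b i + A2root a b (i + 3) = 0) ∧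
    ∃ ω : EuclideanSpace ℝ (Fin 2) → EuclideanSpace ℝ (Fin 2) → ℤ,
      (∀ v, ω 0 v = 0) ∧ (∀ v, ω v 0 = 0) ∧
      (∀ i : Fin 6, ω (A2root a b i) (A2root a b (i + 2)) = 1 ∧
          ω (A2root a b i) (A2root a b (i + 3)) = 0 ∧
          ω (A2root a b i) (A2root a b (i + 4)) = -1) ∧
      (∀ α ∈ A2zero a b, ∀ β ∈ A2zero a b, ∀ γ ∈ A2zero a b,
        α + β ∈ A2zero a b → β + γ ∈ A2zero a b → α + β + γ ∈ A2zero a b →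
        ω β γ - ω (α + β) γ + ω α (β + γ) - ω α β = 0) ∧
      (∀ α ∈ A2zero a b, ∀ β ∈ A2zero a b, α + β ∈ A2zero a b → ω β α = - ω α β) ∧
      (¬ ∀ α ∈ A2zero a b, ∀ β ∈ A2zero a b, α + β ∈ A2zero a b → ω α β = 0) ∧
      (¬ ∃ ω1 : EuclideanSpace ℝ (Fin 2) → ℤ, ω1 0 = 0 ∧
        ∀ α ∈ A2zero a b, ∀ β ∈ A2zero a b, α + β ∈ A2zero a b →
          ω α β = ω1 α + ω1 β - ω1 (α + β)) := by
  have hd : a 0 * b 1 - a 1 * b 0 ≠ 0 := by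
    have hna : ‖a‖ ^ 2 = a 0 ^ 2 + a 1 ^ 2 := by
      rw [← real_inner_self_eq_norm_sq]
      simp only [PiLp.inner_apply, Fin.sum_univ_two, RCLike.inner_apply, conj_trivial]; ring
    have hnb : ‖b‖ ^ 2 = b 0 ^ 2 + b 1 ^ 2 := by
      rw [← real_inner_self_eq_norm_sq]
      simp only [PiLp.inner_apply, Fin.sum_univ_two, RCLike.inner_apply, conj_trivial]; ring
    have hib : ⟪a, b⟫ = a 0 * b 0 + a 1 * b 1 := by
      simp [PiLp.inner_apply, Fin.sum_univ_two]; ring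
    have hb2 : b 0 ^ 2 + b 1 ^ 2 = a 0 ^ 2 + a 1 ^ 2 := by
      rw [← hna, ← hnb, hnorm]
    have hab : a 0 * b 0 + a 1 * b 1 = -(a 0 ^ 2 + a 1 ^ 2) / 2 := by
      rw [← hib, ← hna]; exact hangle
    have hpos : 0 < ‖a‖ := norm_pos_iff.mpr ha
    have hs : 0 < a 0 ^ 2 + a 1 ^ 2 := by rw [← hna]; positivity
    intro h
    nlinarith [sq_nonneg (a 0 * b 0 + a 1 * b 1), hs]
  refine ⟨?_, om a b, fun v => om_zero_left a b v, fun v => om_zero_right a b v, ?_, ?_, ?_, ?_, ?_⟩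
  · intro i
    fin_cases i
    · exact ⟨show a + b = a + b by module, show a + -a = 0 by module⟩
    · exact ⟨show (a + b) + -a = b by module, show (a + b) + (-a - b) = 0 by module⟩
    · exact ⟨show b + (-a - b) = -a by module, show b + -b = 0 by module⟩
    · exact ⟨show -a + -b = -a - b by module, show -a + a = 0 by module⟩
    · exact ⟨show (-a - b) + a = -b by module, show (-a - b) + (a + b) = 0 by module⟩
    · exact ⟨show -b + (a + b) = a by module, show -b + b = 0 by module⟩
  · intro i
    fin_cases i
    · exact ⟨show om a b a b = 1 from (ev a b hd (1) (0) (0) (1) _ _ (by module) (by module)).trans (by decide),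
        show om a b a (-a) = 0 from (ev a b hd (1) (0) (-1) (0) _ _ (by module) (by module)).trans (by decide),
        show om a b a (-a - b) = -1 from (ev a b hd (1) (0) (-1) (-1) _ _ (by module) (by module)).trans (by decide)⟩
    · exact ⟨show om a b (a + b) (-a) = 1 from (ev a b hd (1) (1) (-1) (0) _ _ (by module) (by module)).trans (by decide),
        show om a b (a + b) (-a - b) = 0 from (ev a b hd (1) (1) (-1) (-1) _ _ (by module) (by module)).trans (by decide),
        show om a b (a + b) (-b) = -1 from (ev a b hd (1) (1) (0) (-1) _ _ (by module) (by module)).trans (by decide)⟩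
    · exact ⟨show om a b b (-a - b) = 1 from (ev a b hd (0) (1) (-1) (-1) _ _ (by module) (by module)).trans (by decide),
        show om a b b (-b) = 0 from (ev a b hd (0) (1) (0) (-1) _ _ (by module) (by module)).trans (by decide),
        show om a b b a = -1 from (ev a b hd (0) (1) (1) (0) _ _ (by module) (by module)).trans (by decide)⟩
    · exact ⟨show om a b (-a) (-b) = 1 from (ev a b hd (-1) (0) (0) (-1) _ _ (by module) (by module)).trans (by decide),
        show om a b (-a) a = 0 from (ev a b hd (-1) (0) (1) (0) _ _ (by module) (by module)).trans (by decide),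
        show om a b (-a) (a + b) = -1 from (ev a b hd (-1) (0) (1) (1) _ _ (by module) (by module)).trans (by decide)⟩
    · exact ⟨show om a b (-a - b) a = 1 from (ev a b hd (-1) (-1) (1) (0) _ _ (by module) (by module)).trans (by decide),
        show om a b (-a - b) (a + b) = 0 from (ev a b hd (-1) (-1) (1) (1) _ _ (by module) (by module)).trans (by decide),
        show om a b (-a - b) b = -1 from (ev a b hd (-1) (-1) (0) (1) _ _ (by module) (by module)).trans (by decide)⟩
    · exact ⟨show om a b (-b) (a + b) = 1 from (ev a b hd (0) (-1) (1) (1) _ _ (by module) (by module)).trans (by decide),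
        show om a b (-b) b = 0 from (ev a b hd (0) (-1) (0) (1) _ _ (by module) (by module)).trans (by decide),
        show om a b (-b) (-a) = -1 from (ev a b hd (0) (-1) (-1) (0) _ _ (by module) (by module)).trans (by decide)⟩
  · intro α hα β hβ γ hγ h4 h5 h6
    obtain ⟨p, hp, hpe⟩ := exists_coords a b α hα
    obtain ⟨q, hq, hqe⟩ := exists_coords a b β hβ
    obtain ⟨r, hr, hre⟩ := exists_coords a b γ hγ
    have hpq : α + β = (((p.1 + q.1 : ℤ)):ℝ) • a + (((p.2 + q.2 : ℤ)):ℝ) • b := by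
      rw [hpe, hqe]; push_cast; module
    have hqr : β + γ = (((q.1 + r.1 : ℤ)):ℝ) • a + (((q.2 + r.2 : ℤ)):ℝ) • b := by
      rw [hqe, hre]; push_cast; module
    have hpqr : α + β + γ = (((p.1 + q.1 + r.1 : ℤ)):ℝ) • a + (((p.2 + q.2 + r.2 : ℤ)):ℝ) • b := by
      rw [hpe, hqe, hre]; push_cast; module
    have m4 : (p.1 + q.1, p.2 + q.2) ∈ A2L := mem_coords a b hd _ _ (by rw [← hpq]; exact h4)
    have m5 : (q.1 + r.1, q.2 + r.2) ∈ A2L := mem_coords a b hd _ _ (by rw [← hqr]; exact h5)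
    have m6 : (p.1 + q.1 + r.1, p.2 + q.2 + r.2) ∈ A2L :=
      mem_coords a b hd _ _ (by rw [← hpqr]; exact h6)
    rw [ev a b hd q.1 q.2 r.1 r.2 β γ hqe hre,
      ev a b hd (p.1 + q.1) (p.2 + q.2) r.1 r.2 (α + β) γ hpq hre,
      ev a b hd p.1 p.2 (q.1 + r.1) (q.2 + r.2) α (β + γ) hpe hqr,
      ev a b hd p.1 p.2 q.1 q.2 α β hpe hqe]
    exact coc_int p hp q hq r hr m4 m5 m6
  · intro α _ β _ _
    exact om_antisymm a b α β
  · intro h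
    have h1 := h a ((mem_A2zero_iff a b a).mpr (by tauto)) b ((mem_A2zero_iff a b b).mpr (by tauto))
      ((mem_A2zero_iff a b (a + b)).mpr (by tauto))
    exact absurd ((ev a b hd 1 0 0 1 a b (by module) (by module)).symm.trans h1) (by decide)
  · rintro ⟨ω1, h0, h⟩
    have M0 : (0 : EuclideanSpace ℝ (Fin 2)) ∈ A2zero a b := (mem_A2zero_iff a b _).mpr (by tauto)
    have M1 : a ∈ A2zero a b := (mem_A2zero_iff a b _).mpr (by tauto)
    have M2 : (a + b) ∈ A2zero a b := (mem_A2zero_iff a b _).mpr (by tauto)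
    have M3 : b ∈ A2zero a b := (mem_A2zero_iff a b _).mpr (by tauto)
    have M4 : (-a) ∈ A2zero a b := (mem_A2zero_iff a b _).mpr (by tauto)
    have M5 : (-a - b) ∈ A2zero a b := (mem_A2zero_iff a b _).mpr (by tauto)
    have M6 : (-b) ∈ A2zero a b := (mem_A2zero_iff a b _).mpr (by tauto)
    have e0 := h a M1 b M3 ((mem_A2zero_iff a b _).mpr (Or.inr (Or.inr (Or.inl (by module)))))
    rw [show om a b a b = 1 from (ev a b hd (1) (0) (0) (1) _ _ (by module) (by module)).trans (by decide),
        show a + b = (a + b) from by module] at e0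
    have e1 := h (a + b) M2 (-a) M4 ((mem_A2zero_iff a b _).mpr (Or.inr (Or.inr (Or.inr (Or.inl (by module))))))
    rw [show om a b (a + b) (-a) = 1 from (ev a b hd (1) (1) (-1) (0) _ _ (by module) (by module)).trans (by decide),
        show (a + b) + (-a) = b from by module] at e1
    have e2 := h b M3 (-a - b) M5 ((mem_A2zero_iff a b _).mpr (Or.inr (Or.inr (Or.inr (Or.inr (Or.inl (by module)))))))
    rw [show om a b b (-a - b) = 1 from (ev a b hd (0) (1) (-1) (-1) _ _ (by module) (by module)).trans (by decide),
        show b + (-a - b) = (-a) from by module] at e2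
    have e3 := h (-a) M4 (-b) M6 ((mem_A2zero_iff a b _).mpr (Or.inr (Or.inr (Or.inr (Or.inr (Or.inr (Or.inl (by module))))))))
    rw [show om a b (-a) (-b) = 1 from (ev a b hd (-1) (0) (0) (-1) _ _ (by module) (by module)).trans (by decide),
        show (-a) + (-b) = (-a - b) from by module] at e3
    have e4 := h (-a - b) M5 a M1 ((mem_A2zero_iff a b _).mpr (Or.inr (Or.inr (Or.inr (Or.inr (Or.inr (Or.inr (by module))))))))
    rw [show om a b (-a - b) a = 1 from (ev a b hd (-1) (-1) (1) (0) _ _ (by module) (by module)).trans (by decide),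
        show (-a - b) + a = (-b) from by module] at e4
    have e5 := h (-b) M6 (a + b) M2 ((mem_A2zero_iff a b _).mpr (Or.inr (Or.inl (by module))))
    rw [show om a b (-b) (a + b) = 1 from (ev a b hd (0) (-1) (1) (1) _ _ (by module) (by module)).trans (by decide),
        show (-b) + (a + b) = a from by module] at e5
    have f0 := h a M1 (-a) M4 ((mem_A2zero_iff a b _).mpr (Or.inl (by module)))
    rw [show om a b a (-a) = 0 from (ev a b hd (1) (0) (-1) (0) _ _ (by module) (by module)).trans (by decide),
        show a + (-a) = (0 : EuclideanSpace ℝ (Fin 2)) from by module, h0] at f0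
    have f1 := h (a + b) M2 (-a - b) M5 ((mem_A2zero_iff a b _).mpr (Or.inl (by module)))
    rw [show om a b (a + b) (-a - b) = 0 from (ev a b hd (1) (1) (-1) (-1) _ _ (by module) (by module)).trans (by decide),
        show (a + b) + (-a - b) = (0 : EuclideanSpace ℝ (Fin 2)) from by module, h0] at f1
    have f2 := h b M3 (-b) M6 ((mem_A2zero_iff a b _).mpr (Or.inl (by module)))
    rw [show om a b b (-b) = 0 from (ev a b hd (0) (1) (0) (-1) _ _ (by module) (by module)).trans (by decide),
        show b + (-b) = (0 : EuclideanSpace ℝ (Fin 2)) from by module, h0] at f2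
    omega
end
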